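/- Let p ≥ 1 be an integer and let h > 0 be such that 2/h is a positive integer and h·p < 1. Let u ∈ H¹(−1,1) with u(−1) = u(1), and suppose w ∈ Ŝ_{p,h}(−1,1) satisfies the Galerkin orthogonality condition (w, v)_{H¹∘} = (u, v)_{H¹∘} for all v ∈ Ŝ_{p,h}(−1,1). Then ‖u − w‖_{L²(−1,1)} ≤ √2 · h · |u|_{H¹(−1,1)}. -/

import Mathlib

open MeasureTheory Set

/-- The `L²(a,b)` norm of a function. -/
noncomputable def L2 (a b : ℝ) (v : ℝ → ℝ) : ℝ :=
  Real.sqrt (∫ x in Set.Ioo a b, v x ^ 2)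

/-- `u` belongs to the spline space `S_{p,h}(a,b)` of maximum smoothness
(`u` is `(p-1)`-times continuously differentiable on `[a,b]` and coincides with a
polynomial of degree at most `p` on each of the `n = (b-a)/h` subintervals). -/
def IsSplineOn (p n : ℕ) (h a b : ℝ) (u : ℝ → ℝ) : Prop :=
  ContDiffOn ℝ (p - 1 : ℕ) u (Set.Icc a b) ∧
  ∀ j < n, ∃ P : Polynomial ℝ, P.natDegree ≤ p ∧
    ∀ x ∈ Set.Icc (a + j * h) (a + (j + 1) * h), u x = P.eval x

/-- `u ∈ H¹(a,b)` with weak derivative `g`: `u` is absolutely continuous on `[a,b]`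
(an indefinite integral of the locally integrable `g`) and `g` is square-integrable. -/
def IsH1On (a b : ℝ) (u g : ℝ → ℝ) : Prop :=
  IntervalIntegrable g volume a b ∧
  (∀ x ∈ Set.Icc a b, u x = u a + ∫ t in a..x, g t) ∧
  IntegrableOn (fun x => g x ^ 2) (Set.Ioo a b)

/-- The periodic spline space `Ŝ_{p,h}(a,b)`: splines whose derivatives up to
order `p-1` agree at the two endpoints. -/
def IsPeriodicSplineOn (p n : ℕ) (h a b : ℝ) (u : ℝ → ℝ) : Prop :=
  IsSplineOn p n h a b u ∧
  ∀ l < p, iteratedDerivWithin l u (Set.Icc a b) a = iteratedDerivWithin l u (Set.Icc a b) b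

section
variable {n : ℕ} {h : ℝ}

namespace PHPE

/-- product of two square-integrable functions is integrable -/
lemma mul_integrable {S : Set ℝ} {f g : ℝ → ℝ}
    (hfm : AEStronglyMeasurable f (volume.restrict S))
    (hgm : AEStronglyMeasurable g (volume.restrict S))
    (hf2 : IntegrableOn (fun x => f x ^ 2) S) (hg2 : IntegrableOn (fun x => g x ^ 2) S) :
    IntegrableOn (fun x => f x * g x) S := by
  have hb : ∀ᵐ x ∂(volume.restrict S), ‖f x * g x‖ ≤ (f x ^ 2 + g x ^ 2) / 2 := by
    filter_upwards with x
    rw [Real.norm_eq_abs, abs_mul]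
    nlinarith [sq_nonneg (|f x| - |g x|), abs_nonneg (f x), abs_nonneg (g x), sq_abs (f x), sq_abs (g x)]
  exact Integrable.mono' ((hf2.add hg2).div_const 2) (hfm.mul hgm) hb

/-- elementary Cauchy-Schwarz for set integrals -/
lemma cauchy_schwarz {S : Set ℝ} {f g : ℝ → ℝ}
    (hfm : AEStronglyMeasurable f (volume.restrict S))
    (hgm : AEStronglyMeasurable g (volume.restrict S))
    (hf2 : IntegrableOn (fun x => f x ^ 2) S) (hg2 : IntegrableOn (fun x => g x ^ 2) S) :
    (∫ x in S, f x * g x) ≤ Real.sqrt (∫ x in S, f x ^ 2) * Real.sqrt (∫ x in S, g x ^ 2) := by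
  set A := ∫ x in S, f x ^ 2 with hA
  set B := ∫ x in S, g x ^ 2 with hB
  have hA0 : 0 ≤ A := by positivity
  have hB0 : 0 ≤ B := by positivity
  have key : ∀ t : ℝ, 0 < t → (∫ x in S, f x * g x) ≤ (t * A + B / t) / 2 := by
    intro t ht
    have hmono : (∫ x in S, f x * g x) ≤ ∫ x in S, (t * f x ^ 2 + g x ^ 2 / t) / 2 := by
      refine integral_mono_ae (mul_integrable hfm hgm hf2 hg2)
        (((hf2.const_mul t).add (hg2.div_const t)).div_const 2) ?_
      filter_upwards with x
      rw [le_div_iff₀ (by norm_num : (0:ℝ) < 2), ← mul_le_mul_iff_of_pos_right ht]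
      have hexp : (t * f x ^ 2 + g x ^ 2 / t) * t = t^2 * f x ^2 + g x ^2 := by
        field_simp
      rw [hexp]
      nlinarith [sq_nonneg (t * f x - g x)]
    calc (∫ x in S, f x * g x) ≤ ∫ x in S, (t * f x ^ 2 + g x ^ 2 / t) / 2 := hmono
      _ = (t * A + B / t) / 2 := by
          rw [integral_div, integral_add (hf2.const_mul t) (hg2.div_const t),
            integral_const_mul, integral_div]
  rcases eq_or_lt_of_le hA0 with hA' | hA'
  · have hle : (∫ x in S, f x * g x) ≤ 0 := by
      refine le_of_forall_pos_le_add ?_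
      intro ε hε
      have ht : 0 < (B+1)/ε := by positivity
      have hk := key _ ht
      rw [← hA', mul_zero, zero_add] at hk
      have h4 : B/((B+1)/ε) = B*ε/(B+1) := by rw [div_div_eq_mul_div]
      have h5 : B*ε/(B+1) ≤ ε := by rw [div_le_iff₀ (by positivity)]; nlinarith
      rw [h4] at hk; linarith
    calc (∫ x in S, f x * g x) ≤ 0 := hle
      _ ≤ _ := by positivity
  · rcases eq_or_lt_of_le hB0 with hB' | hB'
    · have hle : (∫ x in S, f x * g x) ≤ 0 := by
        refine le_of_forall_pos_le_add ?_
        intro ε hε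
        have ht : 0 < ε/(A+1) := by positivity
        have hk := key _ ht
        rw [← hB'] at hk
        have h4 : ε/(A+1)*A ≤ ε := by rw [div_mul_eq_mul_div, div_le_iff₀ (by positivity)]; nlinarith
        have h6 : (0:ℝ)/(ε/(A+1)) = 0 := zero_div _
        rw [h6, add_zero] at hk
        linarith
      calc (∫ x in S, f x * g x) ≤ 0 := hle
        _ ≤ _ := by positivity
    · have ht : 0 < Real.sqrt B / Real.sqrt A := by positivity
      have hk := key _ ht
      have hsA : Real.sqrt A ^ 2 = A := Real.sq_sqrt hA0
      have hsB : Real.sqrt B ^ 2 = B := Real.sq_sqrt hB0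
      have hsA' : (0:ℝ) < Real.sqrt A := Real.sqrt_pos.2 hA'
      have hsB' : (0:ℝ) < Real.sqrt B := Real.sqrt_pos.2 hB'
      have heq : (Real.sqrt B / Real.sqrt A * A + B / (Real.sqrt B / Real.sqrt A)) / 2
          = Real.sqrt A * Real.sqrt B := by
        field_simp
        nlinarith [hsA, hsB]
      rw [heq] at hk; exact hk



/-- polynomial antiderivative -/
noncomputable def antider (P : Polynomial ℝ) : Polynomial ℝ :=
  P.sum fun k a => Polynomial.C (a/(k+1)) * Polynomial.X^(k+1)

lemma antider_derivative (P : Polynomial ℝ) : (antider P).derivative = P := by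
  unfold antider
  rw [Polynomial.sum, map_sum]
  conv_rhs => rw [P.as_sum_support_C_mul_X_pow]
  refine Finset.sum_congr rfl ?_
  intro k hk
  rw [Polynomial.derivative_C_mul, Polynomial.derivative_X_pow, Nat.add_sub_cancel,
    ← mul_assoc, ← Polynomial.C_mul]
  congr 1
  push_cast
  field_simp

lemma antider_natDegree (P : Polynomial ℝ) : (antider P).natDegree ≤ P.natDegree + 1 := by
  unfold antider
  rw [Polynomial.sum]
  refine Polynomial.natDegree_sum_le_of_forall_le _ _ ?_
  intro k hk
  refine le_trans (Polynomial.natDegree_C_mul_le _ _) ?_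
  rw [Polynomial.natDegree_X_pow]
  exact Nat.succ_le_succ (Polynomial.le_natDegree_of_mem_supp k hk)

lemma poly_hasDerivAt (P : Polynomial ℝ) (x : ℝ) :
    HasDerivAt (fun y => (antider P).eval y) (P.eval x) x := by
  have := Polynomial.hasDerivAt (antider P) x
  rwa [antider_derivative] at this

lemma poly_ftc (P : Polynomial ℝ) (a b : ℝ) :
    ∫ x in a..b, P.eval x = (antider P).eval b - (antider P).eval a := by
  refine intervalIntegral.integral_eq_sub_of_hasDerivAt (fun x _ => poly_hasDerivAt P x) ?_
  exact (Polynomial.continuous P).intervalIntegrable _ _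



noncomputable def knot (h : ℝ) (j : ℕ) : ℝ := -1 + j * h

lemma knot_zero (h : ℝ) : knot h 0 = -1 := by simp [knot]

lemma knot_succ (h : ℝ) (j : ℕ) : knot h (j+1) = knot h j + h := by
  simp [knot]; push_cast; ring

lemma knot_n {n : ℕ} {h : ℝ} (hgrid : (2:ℝ) = n * h) : knot h n = 1 := by
  simp [knot, ← hgrid]; norm_num

lemma knot_mono {h : ℝ} (hh : 0 < h) {j k : ℕ} (hjk : j ≤ k) : knot h j ≤ knot h k := by
  unfold knot
  have : (j:ℝ) ≤ k := Nat.cast_le.2 hjk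
  nlinarith

lemma knot_lt {h : ℝ} (hh : 0 < h) {j k : ℕ} (hjk : j < k) : knot h j < knot h k := by
  unfold knot
  have : (j:ℝ) < k := Nat.cast_lt.2 hjk
  nlinarith

lemma piece_subset {n : ℕ} {h : ℝ} (hh : 0 < h) (hgrid : (2:ℝ) = n * h) {j : ℕ} (hj : j < n) :
    Icc (knot h j) (knot h (j+1)) ⊆ Icc (-1:ℝ) 1 := by
  intro x hx
  constructor
  · calc (-1:ℝ) = knot h 0 := (knot_zero h).symm
      _ ≤ knot h j := knot_mono hh (Nat.zero_le j)
      _ ≤ x := hx.1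
  · calc x ≤ knot h (j+1) := hx.2
      _ ≤ knot h n := knot_mono hh hj
      _ = 1 := knot_n hgrid

lemma exists_piece {n : ℕ} {h : ℝ} (hh : 0 < h) (hgrid : (2:ℝ) = n * h) {x : ℝ}
    (hx : x ∈ Ioo (-1:ℝ) 1) (hk : ∀ j : ℕ, x ≠ knot h j) :
    ∃ j, j < n ∧ x ∈ Ioo (knot h j) (knot h (j+1)) := by
  obtain ⟨hx1, hx2⟩ := hx
  set r := (x + 1) / h with hr
  have hr0 : 0 ≤ r := div_nonneg (by linarith) hh.le
  set j := ⌊r⌋₊ with hj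
  have hj1 : (j:ℝ) ≤ r := Nat.floor_le hr0
  have hj2 : r < j + 1 := Nat.lt_floor_add_one r
  have hrn : r < n := by
    rw [hr, div_lt_iff₀ hh]
    nlinarith
  have hjn : j < n := by
    have : (j:ℝ) < n := lt_of_le_of_lt hj1 hrn
    exact_mod_cast this
  refine ⟨j, hjn, ?_, ?_⟩
  · have hle : knot h j ≤ x := by
      unfold knot
      rw [hr, le_div_iff₀ hh] at hj1
      linarith
    exact lt_of_le_of_ne hle (Ne.symm (hk j))
  · unfold knot
    rw [hr, div_lt_iff₀ hh] at hj2
    push_cast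
    linarith

/-- polynomial piece of a spline, in knot form -/
lemma spline_piece {q n : ℕ} {h : ℝ} {v : ℝ → ℝ} (hv : IsSplineOn q n h (-1) 1 v)
    {j : ℕ} (hj : j < n) :
    ∃ P : Polynomial ℝ, P.natDegree ≤ q ∧
      ∀ x ∈ Icc (knot h j) (knot h (j+1)), v x = P.eval x := by
  obtain ⟨P, hP1, hP2⟩ := hv.2 j hj
  exact ⟨P, hP1, fun x hx => hP2 x (by simpa [knot] using hx)⟩



lemma exists_piece_closed (hh : 0 < h) (hn : 0 < n) (hgrid : (2:ℝ) = n * h) {x : ℝ}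
    (hx : x ∈ Icc (-1:ℝ) 1) :
    ∃ j, j < n ∧ x ∈ Icc (knot h j) (knot h (j+1)) := by
  by_cases hx1 : x = 1
  · refine ⟨n - 1, by omega, ?_⟩
    have hkn : knot h ((n-1)+1) = 1 := by
      rw [show (n-1)+1 = n by omega, knot_n hgrid]
    constructor
    · rw [hx1, ← hkn, knot_succ]
      have := knot_n (n := n) (h := h) hgrid
      rw [show (n-1)+1 = n by omega] at hkn
      linarith [hkn]
    · rw [hx1, hkn]
  · have hx2 : x < 1 := lt_of_le_of_ne hx.2 hx1
    set r := (x + 1) / h with hr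
    have hr0 : 0 ≤ r := div_nonneg (by linarith [hx.1]) hh.le
    set j := ⌊r⌋₊ with hj
    have hj1 : (j:ℝ) ≤ r := Nat.floor_le hr0
    have hj2 : r < j + 1 := Nat.lt_floor_add_one r
    have hrn : r < n := by
      rw [hr, div_lt_iff₀ hh]
      nlinarith
    have hjn : j < n := by
      have : (j:ℝ) < n := lt_of_le_of_lt hj1 hrn
      exact_mod_cast this
    refine ⟨j, hjn, ?_, ?_⟩
    · unfold knot
      rw [hr, le_div_iff₀ hh] at hj1
      linarith
    · unfold knot
      rw [hr, div_lt_iff₀ hh] at hj2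
      push_cast
      linarith



/-- the primitive based at `-1` -/
noncomputable def prim (f : ℝ → ℝ) (x : ℝ) : ℝ := ∫ t in (-1:ℝ)..x, f t

lemma intervalIntegrable_of_Ioc {f : ℝ → ℝ} (hf : IntegrableOn f (Ioc (-1:ℝ) 1))
    {a b : ℝ} (ha : a ∈ Icc (-1:ℝ) 1) (hb : b ∈ Icc (-1:ℝ) 1) :
    IntervalIntegrable f volume a b := by
  constructor
  · exact hf.mono_set (fun t ht => ⟨lt_of_le_of_lt ha.1 ht.1, le_trans ht.2 hb.2⟩)
  · exact hf.mono_set (fun t ht => ⟨lt_of_le_of_lt hb.1 ht.1, le_trans ht.2 ha.2⟩)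

lemma prim_continuousOn {f : ℝ → ℝ} (hf : IntegrableOn f (Ioc (-1:ℝ) 1)) :
    ContinuousOn (prim f) (Icc (-1:ℝ) 1) := by
  have h2 : IntegrableOn f (uIcc (-1:ℝ) 1) := by
    rw [uIcc_of_le (by norm_num : (-1:ℝ) ≤ 1)]
    rw [← Set.Ioc_insert_left (by norm_num : (-1:ℝ) ≤ 1), Set.insert_eq]
    have hs : IntegrableOn f ({-1} : Set ℝ) := by
      have h0 : volume.restrict ({-1} : Set ℝ) = 0 :=
        Measure.restrict_eq_zero.2 (measure_singleton _)
      rw [IntegrableOn, h0]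
      exact integrable_zero_measure
    exact hs.union hf
  have := intervalIntegral.continuousOn_primitive_interval (a := (-1:ℝ)) (b := 1) h2
  rwa [uIcc_of_le (by norm_num : (-1:ℝ) ≤ 1)] at this

/-- derivative of a function equal to a polynomial on a closed piece, inside -/
lemma deriv_eq_on_piece {v : ℝ → ℝ} {P : Polynomial ℝ} {α β x : ℝ}
    (hx : x ∈ Ioo α β) (heq : ∀ y ∈ Icc α β, v y = P.eval y) :
    deriv v x = P.derivative.eval x := by
  have hev : v =ᶠ[nhds x] (fun y => P.eval y) := by
    filter_upwards [Ioo_mem_nhds hx.1 hx.2] with y hy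
    exact heq y ⟨hy.1.le, hy.2.le⟩
  rw [hev.deriv_eq, Polynomial.deriv]

/-- integrability over `Ioc (-1) 1` from integrability on the open pieces -/
lemma integrableOn_of_pieces (hh : 0 < h) (hn : 0 < n) (hgrid : (2:ℝ) = n * h)
    {φ : ℝ → ℝ} (hφ : ∀ j, j < n → IntegrableOn φ (Ioo (knot h j) (knot h (j+1)))) :
    IntegrableOn φ (Ioc (-1:ℝ) 1) := by
  set F : Finset ℝ := Finset.image (knot h) (Finset.range (n+1)) with hF
  have hE : IntegrableOn φ (⋃ j ∈ Finset.range n, Ioo (knot h j) (knot h (j+1))) :=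
    integrableOn_finset_iUnion.2 (fun j hj => hφ j (Finset.mem_range.1 hj))
  have hFnull : IntegrableOn φ (F : Set ℝ) := by
    have : volume.restrict (F : Set ℝ) = 0 :=
      Measure.restrict_eq_zero.2 ((F : Set ℝ).toFinite.measure_zero _)
    rw [IntegrableOn, this]
    exact integrable_zero_measure
  refine (hE.union hFnull).mono_set ?_
  intro x hx
  by_cases hxF : x ∈ (F : Set ℝ)
  · exact Or.inr hxF
  · left
    have hxne : ∀ j : ℕ, x ≠ knot h j := by
      intro j hxj
      by_cases hjn : j ≤ n
      · exact hxF (by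
          simp only [hF, Finset.coe_image, Set.mem_image]
          exact ⟨j, by simp [Finset.mem_range]; omega, hxj.symm⟩)
      · push_neg at hjn
        have h2 : (1:ℝ) < knot h j := by rw [← knot_n hgrid]; exact knot_lt hh hjn
        rw [← hxj] at h2
        linarith [hx.2]
    have hx1 : x < 1 := lt_of_le_of_ne hx.2 (by rw [← knot_n hgrid]; exact hxne n)
    obtain ⟨j, hjn, hxj⟩ := exists_piece hh hgrid ⟨hx.1, hx1⟩ hxne
    simp only [Set.mem_iUnion]
    exact ⟨j, Finset.mem_coe.2 (Finset.mem_range.2 hjn), hxj⟩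

/-- integrability of the (pointwise) derivative of a spline, and its square -/
lemma spline_deriv_integrable (hh : 0 < h) (hn : 0 < n) (hgrid : (2:ℝ) = n * h)
    {q : ℕ} {v : ℝ → ℝ} (hv : IsSplineOn q n h (-1) 1 v) :
    IntegrableOn (deriv v) (Ioc (-1:ℝ) 1) ∧
      IntegrableOn (fun x => (deriv v x)^2) (Ioc (-1:ℝ) 1) := by
  constructor
  · refine integrableOn_of_pieces hh hn hgrid ?_
    intro j hj
    obtain ⟨P, _, hP⟩ := spline_piece hv hj
    refine IntegrableOn.congr_fun ?_ (fun x hx => (deriv_eq_on_piece hx hP).symm) measurableSet_Ioo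
    exact ((Polynomial.continuous P.derivative).continuousOn.integrableOn_compact isCompact_Icc).mono_set Ioo_subset_Icc_self
  · refine integrableOn_of_pieces hh hn hgrid ?_
    intro j hj
    obtain ⟨P, _, hP⟩ := spline_piece hv hj
    refine IntegrableOn.congr_fun ?_ (fun x hx => by rw [deriv_eq_on_piece hx hP]) measurableSet_Ioo
    exact (((Polynomial.continuous P.derivative).pow 2).continuousOn.integrableOn_compact isCompact_Icc).mono_set Ioo_subset_Icc_self

/-- FTC for splines -/
lemma spline_ftc (hh : 0 < h) (hn : 0 < n) (hgrid : (2:ℝ) = n * h)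
    {q : ℕ} {v : ℝ → ℝ} (hv : IsSplineOn q n h (-1) 1 v) :
    ∀ x ∈ Icc (-1:ℝ) 1, v x = v (-1) + prim (deriv v) x := by
  have hdint : IntegrableOn (deriv v) (Ioc (-1:ℝ) 1) := (spline_deriv_integrable hh hn hgrid hv).1
  have main : ∀ j, j ≤ n → ∀ x ∈ Icc (-1:ℝ) (knot h j), v x = v (-1) + prim (deriv v) x := by
    intro j
    induction j with
    | zero =>
      intro _ x hx
      rw [knot_zero] at hx
      have : x = -1 := le_antisymm hx.2 hx.1
      subst this
      simp [prim, intervalIntegral.integral_same]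
    | succ j ih =>
      intro hjn x hx
      have hjn' : j < n := hjn
      have hsub := piece_subset hh hgrid hjn'
      by_cases hcase : x ≤ knot h j
      · exact ih (le_of_lt hjn') x ⟨hx.1, hcase⟩
      · push_neg at hcase
        have hxIcc : x ∈ Icc (knot h j) (knot h (j+1)) := ⟨hcase.le, hx.2⟩
        obtain ⟨P, _, hP⟩ := spline_piece hv hjn'
        have hkj_mem : knot h j ∈ Icc (-1:ℝ) 1 :=
          hsub ⟨le_refl _, by rw [knot_succ]; linarith⟩
        have hx_mem : x ∈ Icc (-1:ℝ) 1 := hsub hxIcc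
        have hm1 : (-1:ℝ) ∈ Icc (-1:ℝ) 1 := by norm_num
        have hadj : prim (deriv v) x = prim (deriv v) (knot h j) + ∫ t in knot h j..x, deriv v t := by
          rw [prim, prim, ← intervalIntegral.integral_add_adjacent_intervals
            (intervalIntegrable_of_Ioc hdint hm1 hkj_mem)
            (intervalIntegrable_of_Ioc hdint hkj_mem hx_mem)]
        have hcong : ∫ t in knot h j..x, deriv v t = ∫ t in knot h j..x, P.derivative.eval t := by
          refine intervalIntegral.integral_congr_ae ?_
          have hae : ∀ᵐ t : ℝ, t ∉ ({knot h (j+1)} : Set ℝ) :=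
            (Set.countable_singleton _).ae_notMem volume
          filter_upwards [hae] with t ht' htI
          have ht : t ≠ knot h (j+1) := by simpa using ht'
          rw [uIoc_of_le hcase.le] at htI
          have htIoo : t ∈ Ioo (knot h j) (knot h (j+1)) :=
            ⟨htI.1, lt_of_le_of_ne (le_trans htI.2 hx.2) ht⟩
          exact deriv_eq_on_piece htIoo hP
        have hftc : ∫ t in knot h j..x, P.derivative.eval t = P.eval x - P.eval (knot h j) := by
          refine intervalIntegral.integral_eq_sub_of_hasDerivAt
            (fun t _ => Polynomial.hasDerivAt P t) ?_
          exact (Polynomial.continuous P.derivative).intervalIntegrable _ _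
        have hihkj : v (knot h j) = v (-1) + prim (deriv v) (knot h j) :=
          ih (le_of_lt hjn') (knot h j) ⟨hkj_mem.1, le_refl _⟩
        have hvx : v x = P.eval x := hP x hxIcc
        have hvkj : v (knot h j) = P.eval (knot h j) := hP _ ⟨le_refl _, by rw [knot_succ]; linarith⟩
        rw [hvx, hadj, hcong, hftc]
        rw [hvkj] at hihkj
        linarith
  intro x hx
  exact main n (le_refl n) x (by rwa [knot_n hgrid])



lemma prim_one {f : ℝ → ℝ} : prim f 1 = ∫ x in Ioo (-1:ℝ) 1, f x := by
  rw [prim, intervalIntegral.integral_of_le (by norm_num : (-1:ℝ) ≤ 1),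
    integral_Ioc_eq_integral_Ioo]

/-- integration by parts via Fubini -/
lemma parts {f ρ : ℝ → ℝ} (hf : IntegrableOn f (Ioc (-1:ℝ) 1))
    (hρ : IntegrableOn ρ (Ioc (-1:ℝ) 1)) :
    ∫ x in Ioo (-1:ℝ) 1, prim f x * ρ x
      = (∫ x in Ioo (-1:ℝ) 1, ρ x) * (∫ x in Ioo (-1:ℝ) 1, f x)
        - ∫ t in Ioo (-1:ℝ) 1, f t * prim ρ t := by
  set I : Set ℝ := Ioo (-1:ℝ) 1 with hI
  have hImeas : MeasurableSet I := measurableSet_Ioo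
  have hfI : IntegrableOn f I := hf.mono_set Ioo_subset_Ioc_self
  have hρI : IntegrableOn ρ I := hρ.mono_set Ioo_subset_Ioc_self
  set μ := volume.restrict I with hμ
  set K : ℝ → ℝ → ℝ := fun x t => if t ≤ x then ρ x * f t else 0 with hK
  have hKint : Integrable (Function.uncurry K) (μ.prod μ) := by
    have hbase : Integrable (fun p : ℝ × ℝ => ρ p.1 * f p.2) (μ.prod μ) :=
      Integrable.mul_prod hρI hfI
    have hSmeas : MeasurableSet {p : ℝ × ℝ | p.2 ≤ p.1} :=
      measurableSet_le measurable_snd measurable_fst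
    have : Function.uncurry K = Set.indicator {p : ℝ × ℝ | p.2 ≤ p.1}
        (fun p : ℝ × ℝ => ρ p.1 * f p.2) := by
      ext p
      rw [Set.indicator_apply]
      simp only [Function.uncurry, hK, Set.mem_setOf_eq]
    rw [this]
    exact hbase.indicator hSmeas
  -- identify LHS with iterated integral
  have hLHS : ∫ x in I, prim f x * ρ x = ∫ x, (∫ t, K x t ∂μ) ∂μ := by
    refine setIntegral_congr_fun hImeas ?_
    intro x hx
    have hx1 : (-1:ℝ) ≤ x := hx.1.le
    have hinner : ∫ t, (if t ≤ x then f t else 0) ∂μ = prim f x := by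
      have h1 : ∫ t, (if t ≤ x then f t else 0) ∂μ
          = ∫ t in I, Set.indicator (Ioc (-1) x) f t := by
        refine setIntegral_congr_fun hImeas ?_
        intro t ht
        rw [Set.indicator_apply]
        simp only [mem_Ioc]
        by_cases hc : t ≤ x
        · simp [hc, ht.1]
        · simp [hc]
      rw [h1, setIntegral_indicator measurableSet_Ioc]
      have h2 : I ∩ Ioc (-1) x = Ioc (-1) x := by
        refine inter_eq_self_of_subset_right ?_
        intro t ht
        exact ⟨ht.1, lt_of_le_of_lt ht.2 hx.2⟩
      rw [h2, prim, intervalIntegral.integral_of_le hx1]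
    calc prim f x * ρ x = ρ x * ∫ t, (if t ≤ x then f t else 0) ∂μ := by
          rw [hinner]; ring
      _ = ∫ t, ρ x * (if t ≤ x then f t else 0) ∂μ := (integral_const_mul _ _).symm
      _ = ∫ t, K x t ∂μ := by
          refine integral_congr_ae (Filter.Eventually.of_forall ?_)
          intro t
          simp only [hK, mul_ite, mul_zero]
  rw [hLHS, integral_integral_swap hKint]
  -- compute inner integral after swap
  have hswapped : ∫ t, (∫ x, K x t ∂μ) ∂μ
      = ∫ t, ((∫ x in I, ρ x) - prim ρ t) * f t ∂μ := by
    refine setIntegral_congr_fun hImeas ?_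
    intro t ht
    have hinner2 : ∫ x, (if t ≤ x then ρ x else 0) ∂μ = (∫ x in I, ρ x) - prim ρ t := by
      have h1 : ∫ x, (if t ≤ x then ρ x else 0) ∂μ = ∫ x in I, Set.indicator (Ici t) ρ x := by
        refine setIntegral_congr_fun hImeas ?_
        intro x hx
        rw [Set.indicator_apply]
        simp only [mem_Ici]
      rw [h1, setIntegral_indicator measurableSet_Ici]
      have h2 : I ∩ Ici t = Ico t 1 := by
        ext x
        simp only [hI, mem_inter_iff, mem_Ioo, mem_Ici, mem_Ico]
        constructor
        · rintro ⟨⟨_, hx2⟩, hx3⟩; exact ⟨hx3, hx2⟩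
        · rintro ⟨hx1, hx2⟩; exact ⟨⟨lt_of_lt_of_le ht.1 hx1, hx2⟩, hx1⟩
      rw [h2]
      have h3 : ∫ x in Ico t 1, ρ x = ∫ x in t..1, ρ x := by
        rw [intervalIntegral.integral_of_le ht.2.le, integral_Ioc_eq_integral_Ioo,
          integral_Ico_eq_integral_Ioo]
      rw [h3]
      have h4 : prim ρ t + ∫ x in t..1, ρ x = prim ρ 1 := by
        rw [prim, prim]
        exact intervalIntegral.integral_add_adjacent_intervals
          (intervalIntegrable_of_Ioc hρ (by norm_num) ⟨ht.1.le, ht.2.le⟩)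
          (intervalIntegrable_of_Ioc hρ ⟨ht.1.le, ht.2.le⟩ (by norm_num))
      rw [prim_one] at h4
      linarith
    calc ∫ x, K x t ∂μ = ∫ x, (if t ≤ x then ρ x else 0) * f t ∂μ := by
          refine integral_congr_ae (Filter.Eventually.of_forall ?_)
          intro x
          simp only [hK, ite_mul, zero_mul]
      _ = (∫ x, (if t ≤ x then ρ x else 0) ∂μ) * f t := integral_mul_const _ _
      _ = ((∫ x in I, ρ x) - prim ρ t) * f t := by rw [hinner2]
  rw [hswapped]
  -- split
  have hmarg : Integrable (fun t => ((∫ x in I, ρ x) - prim ρ t) * f t) μ := by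
    have h0 : Integrable (fun t => ∫ x, K x t ∂μ) μ := by
      have := hKint.integral_prod_right
      simpa [Function.uncurry] using this
    refine h0.congr ?_
    rw [hμ]
    refine (ae_restrict_iff' hImeas).2 (Filter.Eventually.of_forall ?_)
    intro t ht
    -- same computation as in hswapped, pointwise
    have hinner2 : ∫ x, (if t ≤ x then ρ x else 0) ∂μ = (∫ x in I, ρ x) - prim ρ t := by
      have h1 : ∫ x, (if t ≤ x then ρ x else 0) ∂μ = ∫ x in I, Set.indicator (Ici t) ρ x := by
        refine setIntegral_congr_fun hImeas ?_
        intro x hx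
        rw [Set.indicator_apply]
        simp only [mem_Ici]
      rw [h1, setIntegral_indicator measurableSet_Ici]
      have h2 : I ∩ Ici t = Ico t 1 := by
        ext x
        simp only [hI, mem_inter_iff, mem_Ioo, mem_Ici, mem_Ico]
        constructor
        · rintro ⟨⟨_, hx2⟩, hx3⟩; exact ⟨hx3, hx2⟩
        · rintro ⟨hx1, hx2⟩; exact ⟨⟨lt_of_lt_of_le ht.1 hx1, hx2⟩, hx1⟩
      rw [h2]
      have h3 : ∫ x in Ico t 1, ρ x = ∫ x in t..1, ρ x := by
        rw [intervalIntegral.integral_of_le ht.2.le, integral_Ioc_eq_integral_Ioo,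
          integral_Ico_eq_integral_Ioo]
      rw [h3]
      have h4 : prim ρ t + ∫ x in t..1, ρ x = prim ρ 1 := by
        rw [prim, prim]
        exact intervalIntegral.integral_add_adjacent_intervals
          (intervalIntegrable_of_Ioc hρ (by norm_num) ⟨ht.1.le, ht.2.le⟩)
          (intervalIntegrable_of_Ioc hρ ⟨ht.1.le, ht.2.le⟩ (by norm_num))
      rw [prim_one] at h4
      linarith
    calc (∫ x, K x t ∂μ) = ∫ x, (if t ≤ x then ρ x else 0) * f t ∂μ := by
          refine integral_congr_ae (Filter.Eventually.of_forall ?_)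
          intro x
          simp only [hK, ite_mul, zero_mul]
      _ = (∫ x, (if t ≤ x then ρ x else 0) ∂μ) * f t := integral_mul_const _ _
      _ = ((∫ x in I, ρ x) - prim ρ t) * f t := by rw [hinner2]
  have hconstf : Integrable (fun t => (∫ x in I, ρ x) * f t) μ := hfI.const_mul _
  have hsplit : (fun t => ((∫ x in I, ρ x) - prim ρ t) * f t)
      = fun t => (∫ x in I, ρ x) * f t - f t * prim ρ t := by
    ext t; ring
  rw [hsplit] at hmarg ⊢
  rw [integral_sub hconstf (by exact (hconstf.sub hmarg).congr (by
        refine Filter.Eventually.of_forall ?_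
        intro t; simp only [Pi.sub_apply]; ring))]
  rw [integral_const_mul]



/-- the primitive of a piecewise polynomial is, on each closed piece, a polynomial -/
lemma prim_piece_eq (hh : 0 < h) (hgrid : (2:ℝ) = n * h)
    {s : ℝ → ℝ} (hsint : IntegrableOn s (Ioc (-1:ℝ) 1)) {j : ℕ} (hj : j < n)
    {P : Polynomial ℝ} (hP : ∀ t ∈ Ioo (knot h j) (knot h (j+1)), s t = P.eval t) :
    ∀ x ∈ Icc (knot h j) (knot h (j+1)),
      prim s x = prim s (knot h j) + (antider P).eval x - (antider P).eval (knot h j) := by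
  intro x hx
  have hsub := piece_subset hh hgrid hj
  have hkj_mem : knot h j ∈ Icc (-1:ℝ) 1 := hsub ⟨le_refl _, by rw [knot_succ]; linarith⟩
  have hx_mem : x ∈ Icc (-1:ℝ) 1 := hsub hx
  have hm1 : (-1:ℝ) ∈ Icc (-1:ℝ) 1 := by norm_num
  have hadj : prim s x = prim s (knot h j) + ∫ t in knot h j..x, s t := by
    rw [prim, prim, ← intervalIntegral.integral_add_adjacent_intervals
      (intervalIntegrable_of_Ioc hsint hm1 hkj_mem)
      (intervalIntegrable_of_Ioc hsint hkj_mem hx_mem)]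
  have hcong : ∫ t in knot h j..x, s t = ∫ t in knot h j..x, P.eval t := by
    refine intervalIntegral.integral_congr_ae ?_
    have hae : ∀ᵐ t : ℝ, t ∉ ({knot h (j+1)} : Set ℝ) :=
      (Set.countable_singleton _).ae_notMem volume
    filter_upwards [hae] with t ht' htI
    have ht : t ≠ knot h (j+1) := by simpa using ht'
    rw [uIoc_of_le hx.1] at htI
    exact hP t ⟨htI.1, lt_of_le_of_ne (le_trans htI.2 hx.2) ht⟩
  rw [hadj, hcong, poly_ftc]
  ring

/-- derivative of the primitive off the knots -/
lemma deriv_prim_off_knots (hh : 0 < h) (hgrid : (2:ℝ) = n * h)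
    {s : ℝ → ℝ} (hsint : IntegrableOn s (Ioc (-1:ℝ) 1))
    (hpieces : ∀ j, j < n → ∃ P : Polynomial ℝ,
      ∀ t ∈ Ioo (knot h j) (knot h (j+1)), s t = P.eval t)
    {x : ℝ} (hx : x ∈ Ioo (-1:ℝ) 1) (hk : ∀ j : ℕ, x ≠ knot h j) :
    deriv (prim s) x = s x := by
  obtain ⟨j, hjn, hxj⟩ := exists_piece hh hgrid hx hk
  obtain ⟨P, hP⟩ := hpieces j hjn
  have hev : prim s =ᶠ[nhds x]
      (fun y => prim s (knot h j) + (antider P).eval y - (antider P).eval (knot h j)) := by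
    filter_upwards [Ioo_mem_nhds hxj.1 hxj.2] with y hy
    exact prim_piece_eq hh hgrid hsint hjn hP y ⟨hy.1.le, hy.2.le⟩
  rw [hev.deriv_eq]
  have hd : HasDerivAt (fun y => prim s (knot h j) + (antider P).eval y
      - (antider P).eval (knot h j)) (P.eval x) x := by
    have h1 := Polynomial.hasDerivAt (antider P) x
    rw [antider_derivative] at h1
    simpa using (h1.const_add (prim s (knot h j))).sub_const ((antider P).eval (knot h j))
  rw [hd.deriv]
  exact (hP x hxj).symm

/-- the set of knots is null -/
lemma ae_not_knot : ∀ᵐ x : ℝ, ∀ j : ℕ, x ≠ knot h j := by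
  have hc : (Set.range (knot h)).Countable := Set.countable_range _
  filter_upwards [hc.ae_notMem volume] with x hx j hxj
  exact hx ⟨j, hxj.symm⟩

/-- integrals against `deriv (prim s)` equal integrals against `s` -/
lemma integral_mul_deriv_prim (hh : 0 < h) (hgrid : (2:ℝ) = n * h)
    {s F : ℝ → ℝ} (hsint : IntegrableOn s (Ioc (-1:ℝ) 1))
    (hpieces : ∀ j, j < n → ∃ P : Polynomial ℝ,
      ∀ t ∈ Ioo (knot h j) (knot h (j+1)), s t = P.eval t) :
    ∫ x in Ioo (-1:ℝ) 1, F x * deriv (prim s) x = ∫ x in Ioo (-1:ℝ) 1, F x * s x := by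
  refine setIntegral_congr_ae measurableSet_Ioo ?_
  filter_upwards [ae_not_knot (h := h)] with x hx hxI
  rw [deriv_prim_off_knots hh hgrid hsint hpieces hxI hx]



lemma uD : UniqueDiffOn ℝ (Icc (-1:ℝ) 1) := uniqueDiffOn_Icc (by norm_num)

/-- `HasDerivWithinAt` for the primitive of a continuous piecewise polynomial -/
lemma prim_hasDerivWithinAt (hh : 0 < h) (hn : 0 < n) (hgrid : (2:ℝ) = n * h)
    {s : ℝ → ℝ} (hsint : IntegrableOn s (Ioc (-1:ℝ) 1))
    (hpieces : ∀ j, j < n → ∃ P : Polynomial ℝ,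
      ∀ t ∈ Icc (knot h j) (knot h (j+1)), s t = P.eval t) :
    ∀ x ∈ Icc (-1:ℝ) 1, HasDerivWithinAt (prim s) (s x) (Icc (-1:ℝ) 1) x := by
  intro x hx
  have piecewise : ∀ j, j < n → HasDerivWithinAt (prim s) (s x) (Icc (knot h j) (knot h (j+1))) x := by
    intro j hj
    by_cases hxj : x ∈ Icc (knot h j) (knot h (j+1))
    · obtain ⟨P, hP⟩ := hpieces j hj
      have hP' : ∀ t ∈ Ioo (knot h j) (knot h (j+1)), s t = P.eval t :=
        fun t ht => hP t ⟨ht.1.le, ht.2.le⟩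
      have heq := prim_piece_eq hh hgrid hsint hj hP'
      have hd : HasDerivWithinAt (fun y => prim s (knot h j) + (antider P).eval y
          - (antider P).eval (knot h j)) (s x) (Icc (knot h j) (knot h (j+1))) x := by
        have h1 := Polynomial.hasDerivAt (antider P) x
        rw [antider_derivative] at h1
        have h2 : HasDerivAt (fun y => prim s (knot h j) + (antider P).eval y
            - (antider P).eval (knot h j)) (P.eval x) x := by
          simpa using (h1.const_add (prim s (knot h j))).sub_const ((antider P).eval (knot h j))
        rw [← hP x hxj] at h2
        exact h2.hasDerivWithinAt
      exact hd.congr (fun y hy => heq y hy) (heq x hxj)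
    · rw [hasDerivWithinAt_iff_hasFDerivWithinAt]
      refine HasFDerivWithinAt.of_notMem_closure ?_
      rwa [isClosed_Icc.closure_eq]
  -- union over pieces
  have union : ∀ m, m ≤ n →
      HasDerivWithinAt (prim s) (s x) (⋃ j ∈ Finset.range m, Icc (knot h j) (knot h (j+1))) x := by
    intro m
    induction m with
    | zero =>
      intro _
      simp only [Finset.range_zero, Finset.notMem_empty, Set.iUnion_of_empty, Set.iUnion_empty]
      rw [hasDerivWithinAt_iff_hasFDerivWithinAt]
      exact HasFDerivWithinAt.of_notMem_closure (by simp)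
    | succ m ih =>
      intro hm
      rw [Finset.range_add_one]
      rw [Finset.set_biUnion_insert]
      exact (piecewise m hm).union (ih (le_of_lt hm))
  have hcover : Icc (-1:ℝ) 1 ⊆ ⋃ j ∈ Finset.range n, Icc (knot h j) (knot h (j+1)) := by
    intro y hy
    obtain ⟨j, hjn, hyj⟩ := exists_piece_closed hh hn hgrid hy
    simp only [Set.mem_iUnion]
    exact ⟨j, Finset.mem_coe.2 (Finset.mem_range.2 hjn), hyj⟩
  exact (union n (le_refl n)).mono hcover

/-- antiderivative lemma: primitive of a mean-zero periodic spline is a periodic spline -/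
lemma prim_spline (hh : 0 < h) (hn : 0 < n) (hgrid : (2:ℝ) = n * h)
    {q : ℕ} (hq : 1 ≤ q) {s : ℝ → ℝ} (hs : IsPeriodicSplineOn q n h (-1) 1 s)
    (hmean : (∫ x in Ioo (-1:ℝ) 1, s x) = 0) :
    IsPeriodicSplineOn (q+1) n h (-1) 1 (prim s) := by
  have hcont : ContinuousOn s (Icc (-1:ℝ) 1) := hs.1.1.continuousOn
  have hsint : IntegrableOn s (Ioc (-1:ℝ) 1) :=
    (hcont.integrableOn_compact isCompact_Icc).mono_set Ioc_subset_Icc_self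
  have hpieces : ∀ j, j < n → ∃ P : Polynomial ℝ,
      ∀ t ∈ Icc (knot h j) (knot h (j+1)), s t = P.eval t := by
    intro j hj
    obtain ⟨P, _, hP⟩ := spline_piece hs.1 hj
    exact ⟨P, hP⟩
  have hD := prim_hasDerivWithinAt hh hn hgrid hsint hpieces
  have hDW : ∀ x ∈ Icc (-1:ℝ) 1, derivWithin (prim s) (Icc (-1:ℝ) 1) x = s x :=
    fun x hx => (hD x hx).derivWithin (uD x hx)
  obtain ⟨q', rfl⟩ : ∃ q', q = q' + 1 := ⟨q - 1, by omega⟩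
  constructor
  constructor
  · -- smoothness
    have hgoal : ContDiffOn ℝ ((q' + 1 + 1 - 1 : ℕ)) (prim s) (Icc (-1:ℝ) 1) := by
      rw [show (q' + 1 + 1 - 1 : ℕ) = q' + 1 by omega]
      have hcast : ((q' + 1 : ℕ) : WithTop ℕ∞) = (q' : WithTop ℕ∞) + 1 := by push_cast; rfl
      rw [hcast, contDiffOn_succ_iff_derivWithin uD]
      refine ⟨fun x hx => ((hD x hx).differentiableWithinAt), by simp, ?_⟩
      have hs' : ContDiffOn ℝ (q' + 1 - 1 : ℕ) s (Icc (-1:ℝ) 1) := hs.1.1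
      rw [show (q' + 1 - 1 : ℕ) = q' by omega] at hs'
      exact hs'.congr hDW
    exact hgoal
  · -- pieces
    intro j hj
    obtain ⟨P, hdeg, hP⟩ := spline_piece hs.1 hj
    have hP' : ∀ t ∈ Ioo (knot h j) (knot h (j+1)), s t = P.eval t :=
      fun t ht => hP t ⟨ht.1.le, ht.2.le⟩
    refine ⟨antider P + Polynomial.C (prim s (knot h j) - (antider P).eval (knot h j)), ?_, ?_⟩
    · refine le_trans (Polynomial.natDegree_add_le _ _) ?_
      simp only [Polynomial.natDegree_C]
      refine max_le (le_trans (antider_natDegree P) (by omega)) (by omega)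
    · intro x hx
      have hx' : x ∈ Icc (knot h j) (knot h (j+1)) := by
        simpa [knot] using hx
      rw [Polynomial.eval_add, Polynomial.eval_C]
      have := prim_piece_eq hh hgrid hsint hj hP' x hx'
      linarith
  · -- periodicity
    intro l hl
    match l with
    | 0 =>
      simp only [iteratedDerivWithin_zero]
      have h1 : prim s (-1) = 0 := by simp [prim]
      rw [h1, prim_one, hmean]
    | (l' + 1) =>
      have hmem1 : (-1:ℝ) ∈ Icc (-1:ℝ) 1 := by norm_num
      have hmem2 : (1:ℝ) ∈ Icc (-1:ℝ) 1 := by norm_num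
      rw [iteratedDerivWithin_succ']
      have hcongr := iteratedDerivWithin_congr (𝕜 := ℝ) (s := Icc (-1:ℝ) 1)
        (n := l') (f := derivWithin (prim s) (Icc (-1:ℝ) 1)) (g := s) hDW
      rw [hcongr hmem1, hcongr hmem2]
      exact hs.2 l' (by omega)

/-- subtracting a constant stays in the periodic spline space -/
lemma spline_sub_const {q : ℕ} {v : ℝ → ℝ} (hv : IsPeriodicSplineOn q n h (-1) 1 v) (c : ℝ) :
    IsPeriodicSplineOn q n h (-1) 1 (fun x => v x - c) := by
  constructor
  constructor
  · exact hv.1.1.sub contDiffOn_const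
  · intro j hj
    obtain ⟨P, hdeg, hP⟩ := hv.1.2 j hj
    refine ⟨P - Polynomial.C c, ?_, ?_⟩
    · refine le_trans (Polynomial.natDegree_sub_le _ _) ?_
      simp [hdeg]
    · intro x hx
      show v x - c = _
      rw [Polynomial.eval_sub, Polynomial.eval_C, hP x hx]
  · intro l hl
    have hmem1 : (-1:ℝ) ∈ Icc (-1:ℝ) 1 := by norm_num
    have hmem2 : (1:ℝ) ∈ Icc (-1:ℝ) 1 := by norm_num
    match l with
    | 0 =>
      simp only [iteratedDerivWithin_zero]
      have := hv.2 0 hl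
      simp only [iteratedDerivWithin_zero] at this
      rw [this]
    | (l' + 1) =>
      rw [iteratedDerivWithin_succ']
      have hDW : ∀ x ∈ Icc (-1:ℝ) 1, derivWithin (fun y => v y - c) (Icc (-1:ℝ) 1) x
          = derivWithin v (Icc (-1:ℝ) 1) x := by
        intro x hx
        exact derivWithin_sub_const c
      have hcongr := iteratedDerivWithin_congr (𝕜 := ℝ) (s := Icc (-1:ℝ) 1)
        (n := l') (f := derivWithin (fun y => v y - c) (Icc (-1:ℝ) 1))
        (g := derivWithin v (Icc (-1:ℝ) 1)) hDW
      rw [hcongr hmem1, hcongr hmem2]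
      have := hv.2 (l' + 1) hl
      rw [iteratedDerivWithin_succ'] at this
      exact this



/-- decomposition of the integral over `Ioc (-1) 1` into pieces -/
lemma sum_pieces (hh : 0 < h) (hgrid : (2:ℝ) = n * h)
    {φ : ℝ → ℝ} (hφ : IntegrableOn φ (Ioc (-1:ℝ) 1)) :
    ∫ x in Ioc (-1:ℝ) 1, φ x = ∑ j ∈ Finset.range n, ∫ x in Ioc (knot h j) (knot h (j+1)), φ x := by
  have main : ∀ m, m ≤ n → ∫ x in Ioc (-1:ℝ) (knot h m), φ x
      = ∑ j ∈ Finset.range m, ∫ x in Ioc (knot h j) (knot h (j+1)), φ x := by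
    intro m
    induction m with
    | zero =>
      intro _
      rw [knot_zero]
      simp
    | succ m ih =>
      intro hm
      have hm' : m < n := hm
      have hsub := piece_subset hh hgrid hm'
      have h1 : knot h 0 ≤ knot h m := knot_mono hh (Nat.zero_le m)
      rw [knot_zero] at h1
      have h2 : knot h m ≤ knot h (m+1) := knot_mono hh (by omega)
      have h3 : knot h (m+1) ≤ 1 := by
        have := knot_mono hh hm
        rwa [knot_n hgrid] at this
      have hsplit : Ioc (-1:ℝ) (knot h (m+1)) = Ioc (-1:ℝ) (knot h m) ∪ Ioc (knot h m) (knot h (m+1)) :=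
        (Set.Ioc_union_Ioc_eq_Ioc h1 h2).symm
      rw [hsplit, setIntegral_union (Set.Ioc_disjoint_Ioc_of_le le_rfl) measurableSet_Ioc
        (hφ.mono_set (fun t ht => ⟨ht.1, le_trans ht.2 (le_trans h2 h3)⟩))
        (hφ.mono_set (fun t ht => ⟨lt_of_le_of_lt h1 ht.1, le_trans ht.2 h3⟩)),
        ih (by omega), Finset.sum_range_succ]
  have := main n (le_refl n)
  rwa [knot_n hgrid] at this

/-- the base case of the induction -/
lemma base_bound (hh : 0 < h) (hn : 0 < n) (hgrid : (2:ℝ) = n * h)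
    {f : ℝ → ℝ} (hf : IntegrableOn f (Ioc (-1:ℝ) 1))
    (hf2 : IntegrableOn (fun x => f x ^ 2) (Ioc (-1:ℝ) 1))
    (hzero : ∀ j, j < n → (∫ x in Ioc (knot h j) (knot h (j+1)), f x) = 0) :
    ∫ x in Ioo (-1:ℝ) 1, (prim f x) ^ 2 ≤ h^2/2 * ∫ x in Ioo (-1:ℝ) 1, f x ^ 2 := by
  have hm1 : (-1:ℝ) ∈ Icc (-1:ℝ) 1 := by norm_num
  have hknot_mem : ∀ j, j ≤ n → knot h j ∈ Icc (-1:ℝ) 1 := by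
    intro j hj
    constructor
    · rw [← knot_zero (h := h)]; exact knot_mono hh (Nat.zero_le j)
    · rw [← knot_n hgrid]; exact knot_mono hh hj
  -- prim vanishes at the knots
  have hprimknot : ∀ j, j ≤ n → prim f (knot h j) = 0 := by
    intro j
    induction j with
    | zero => intro _; rw [knot_zero]; simp [prim]
    | succ j ih =>
      intro hj
      have hj' : j < n := hj
      have hadj : prim f (knot h (j+1)) = prim f (knot h j) + ∫ t in knot h j..knot h (j+1), f t := by
        rw [prim, prim, ← intervalIntegral.integral_add_adjacent_intervals
          (intervalIntegrable_of_Ioc hf hm1 (hknot_mem j (by omega)))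
          (intervalIntegrable_of_Ioc hf (hknot_mem j (by omega)) (hknot_mem (j+1) hj))]
      rw [hadj, ih (by omega), zero_add,
        intervalIntegral.integral_of_le (knot_mono hh (by omega : j ≤ j+1))]
      exact hzero j hj'
  -- pointwise bound on each piece
  have hptwise : ∀ j, j < n → ∀ x ∈ Ioc (knot h j) (knot h (j+1)),
      (prim f x)^2 ≤ (x - knot h j) * ∫ t in Ioc (knot h j) (knot h (j+1)), f t ^ 2 := by
    intro j hj x hx
    have hsub := piece_subset hh hgrid hj
    have hx_mem : x ∈ Icc (-1:ℝ) 1 := hsub ⟨hx.1.le, hx.2⟩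
    have hkj_mem : knot h j ∈ Icc (-1:ℝ) 1 := hknot_mem j (by omega)
    have hprimx : prim f x = ∫ t in Ioc (knot h j) x, f t := by
      have hadj : prim f x = prim f (knot h j) + ∫ t in knot h j..x, f t := by
        rw [prim, prim, ← intervalIntegral.integral_add_adjacent_intervals
          (intervalIntegrable_of_Ioc hf hm1 hkj_mem)
          (intervalIntegrable_of_Ioc hf hkj_mem hx_mem)]
      rw [hadj, hprimknot j (by omega), zero_add,
        intervalIntegral.integral_of_le hx.1.le]
    set S := Ioc (knot h j) x with hS
    have hSsub : S ⊆ Ioc (-1:ℝ) 1 :=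
      fun t ht => ⟨lt_of_le_of_lt hkj_mem.1 ht.1, le_trans ht.2 hx_mem.2⟩
    have hfS : IntegrableOn f S := hf.mono_set hSsub
    have hf2S : IntegrableOn (fun t => f t ^ 2) S := hf2.mono_set hSsub
    have hone : IntegrableOn (fun _ : ℝ => (1:ℝ)^2) S := by
      simp only [one_pow]
      exact integrableOn_const (id (by
        rw [hS, Real.volume_Ioc]
        exact ENNReal.ofReal_ne_top))
    have hvol : ∫ t in S, (1:ℝ)^2 = x - knot h j := by
      simp only [one_pow]
      rw [setIntegral_const, measureReal_def, Real.volume_Ioc, smul_eq_mul, mul_one,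
        ENNReal.toReal_ofReal (by linarith [hx.1] : (0:ℝ) ≤ x - knot h j)]
    have habs : |∫ t in S, f t| ≤ Real.sqrt (∫ t in S, f t ^2) * Real.sqrt (x - knot h j) := by
      rcases abs_cases (∫ t in S, f t) with ⟨heq, _⟩ | ⟨heq, _⟩
      · rw [heq]
        have := cauchy_schwarz (S := S) (f := f) (g := fun _ => 1)
          hfS.1 aestronglyMeasurable_const hf2S hone
        rw [hvol] at this
        simpa using this
      · rw [heq]
        have := cauchy_schwarz (S := S) (f := fun t => -f t) (g := fun _ => 1)
          hfS.neg.1 aestronglyMeasurable_const (by simpa using hf2S) hone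
        rw [hvol] at this
        simp only [mul_one] at this
        rw [integral_neg] at this
        simpa using this
    have hsq : (∫ t in S, f t)^2 ≤ (∫ t in S, f t ^2) * (x - knot h j) := by
      have h1 : (∫ t in S, f t)^2 = |∫ t in S, f t|^2 := (sq_abs _).symm
      rw [h1]
      have h2 : (Real.sqrt (∫ t in S, f t ^2) * Real.sqrt (x - knot h j))^2
          = (∫ t in S, f t ^2) * (x - knot h j) := by
        rw [mul_pow, Real.sq_sqrt (by positivity), Real.sq_sqrt (by linarith [hx.1])]
      rw [← h2]
      exact pow_le_pow_left₀ (abs_nonneg _) habs 2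
    have hmono : (∫ t in S, f t ^2) ≤ ∫ t in Ioc (knot h j) (knot h (j+1)), f t ^2 := by
      refine setIntegral_mono_set (hf2.mono_set (fun t ht =>
        ⟨lt_of_le_of_lt hkj_mem.1 ht.1, le_trans ht.2 (hknot_mem (j+1) hj).2⟩)) ?_ ?_
      · filter_upwards with t using sq_nonneg _
      · exact HasSubset.Subset.eventuallyLE (fun t ht => ⟨ht.1, le_trans ht.2 hx.2⟩)
    rw [hprimx]
    calc (∫ t in S, f t)^2 ≤ (∫ t in S, f t ^2) * (x - knot h j) := hsq
      _ ≤ (∫ t in Ioc (knot h j) (knot h (j+1)), f t ^2) * (x - knot h j) := by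
          refine mul_le_mul_of_nonneg_right hmono (by linarith [hx.1])
      _ = (x - knot h j) * ∫ t in Ioc (knot h j) (knot h (j+1)), f t ^2 := mul_comm _ _
  -- integrate the pointwise bound over each piece
  have hprim_cont : ContinuousOn (prim f) (Icc (-1:ℝ) 1) := prim_continuousOn hf
  have hprim2_int : IntegrableOn (fun x => (prim f x)^2) (Ioc (-1:ℝ) 1) :=
    (((hprim_cont.pow 2).integrableOn_compact isCompact_Icc).mono_set Ioc_subset_Icc_self)
  have hpiece_int : ∀ j, j < n → ∫ x in Ioc (knot h j) (knot h (j+1)), (prim f x)^2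
      ≤ h^2/2 * ∫ t in Ioc (knot h j) (knot h (j+1)), f t ^2 := by
    intro j hj
    have hsub := piece_subset hh hgrid hj
    have hsub' : Ioc (knot h j) (knot h (j+1)) ⊆ Ioc (-1:ℝ) 1 := by
      intro t ht
      have h1 := hknot_mem j (by omega)
      have h2 := hknot_mem (j+1) hj
      exact ⟨lt_of_le_of_lt h1.1 ht.1, le_trans ht.2 h2.2⟩
    have Cnn : 0 ≤ ∫ t in Ioc (knot h j) (knot h (j+1)), f t ^2 := by positivity
    have hlin_int : IntegrableOn (fun x => (x - knot h j) *
        ∫ t in Ioc (knot h j) (knot h (j+1)), f t ^2) (Ioc (knot h j) (knot h (j+1))) := by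
      refine (ContinuousOn.integrableOn_compact isCompact_Icc ?_ ).mono_set Ioc_subset_Icc_self
      exact (continuousOn_id.sub continuousOn_const).mul continuousOn_const
    calc ∫ x in Ioc (knot h j) (knot h (j+1)), (prim f x)^2
        ≤ ∫ x in Ioc (knot h j) (knot h (j+1)), (x - knot h j) *
            ∫ t in Ioc (knot h j) (knot h (j+1)), f t ^2 := by
          refine setIntegral_mono_on (hprim2_int.mono_set hsub') hlin_int measurableSet_Ioc ?_
          intro x hx
          exact hptwise j hj x hx
      _ = (∫ x in Ioc (knot h j) (knot h (j+1)), (x - knot h j)) *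
            ∫ t in Ioc (knot h j) (knot h (j+1)), f t ^2 := integral_mul_const _ _
      _ ≤ h^2/2 * ∫ t in Ioc (knot h j) (knot h (j+1)), f t ^2 := by
          refine mul_le_mul_of_nonneg_right ?_ Cnn
          have : ∫ x in Ioc (knot h j) (knot h (j+1)), (x - knot h j)
              = ∫ x in knot h j..knot h (j+1), (x - knot h j) := by
            rw [intervalIntegral.integral_of_le (knot_mono hh (by omega : j ≤ j+1))]
          rw [this]
          rw [intervalIntegral.integral_sub intervalIntegral.intervalIntegrable_id intervalIntegrable_const,
            integral_id, intervalIntegral.integral_const]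
          rw [knot_succ]
          simp only [smul_eq_mul]
          nlinarith [sq_nonneg h]
  -- sum up
  have hIoo_prim : ∫ x in Ioo (-1:ℝ) 1, (prim f x)^2 = ∫ x in Ioc (-1:ℝ) 1, (prim f x)^2 :=
    integral_Ioc_eq_integral_Ioo.symm
  have hIoo_f : ∫ x in Ioo (-1:ℝ) 1, f x ^2 = ∫ x in Ioc (-1:ℝ) 1, f x ^2 :=
    integral_Ioc_eq_integral_Ioo.symm
  rw [hIoo_prim, hIoo_f, sum_pieces hh hgrid hprim2_int, sum_pieces hh hgrid hf2]
  rw [Finset.mul_sum]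
  exact Finset.sum_le_sum (fun j hj => hpiece_int j (Finset.mem_range.1 hj))



/-- base test function -/
noncomputable def sfun (h : ℝ) (j : ℕ) : ℝ → ℝ :=
  fun t => (if t ∈ Ioo (knot h j) (knot h (j+1)) then (1:ℝ) else 0) - h/2

lemma sfun_eq_on (hh : 0 < h) {i j : ℕ} :
    ∀ t ∈ Ioo (knot h i) (knot h (i+1)),
      sfun h j t = (if i = j then (1:ℝ) else 0) - h/2 := by
  intro t ht
  unfold sfun
  by_cases hij : i = j
  · subst hij
    rw [if_pos ht, if_pos rfl]
  · rw [if_neg hij, if_neg ?_]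
    intro htj
    rcases lt_or_gt_of_ne hij with hlt | hgt
    · have : knot h (i+1) ≤ knot h j := knot_mono hh (by omega)
      exact absurd (lt_of_lt_of_le ht.2 this) (not_lt.2 htj.1.le)
    · have : knot h (j+1) ≤ knot h i := knot_mono hh (by omega)
      exact absurd (lt_of_le_of_lt this ht.1) (not_lt.2 htj.2.le)

lemma Ioo_piece_subset (hh : 0 < h) (hgrid : (2:ℝ) = n * h) {j : ℕ} (hj : j < n) :
    Ioo (knot h j) (knot h (j+1)) ⊆ Ioo (-1:ℝ) 1 := by
  intro t ht
  constructor
  · calc (-1:ℝ) = knot h 0 := (knot_zero h).symm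
      _ ≤ knot h j := knot_mono hh (Nat.zero_le j)
      _ < t := ht.1
  · calc t < knot h (j+1) := ht.2
      _ ≤ knot h n := knot_mono hh hj
      _ = 1 := knot_n hgrid

lemma sfun_integrableOn (hh : 0 < h) (hn : 0 < n) (hgrid : (2:ℝ) = n * h) (j : ℕ) :
    IntegrableOn (sfun h j) (Ioc (-1:ℝ) 1) := by
  refine integrableOn_of_pieces hh hn hgrid ?_
  intro i hi
  refine IntegrableOn.congr_fun ?_ (fun t ht => (sfun_eq_on hh t ht).symm) measurableSet_Ioo
  exact integrableOn_const (id (by rw [Real.volume_Ioo]; exact ENNReal.ofReal_ne_top))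

lemma sfun_pair {j : ℕ} {F : ℝ → ℝ} (hF : IntegrableOn F (Ioo (-1:ℝ) 1))
    (hsub : Ioo (knot h j) (knot h (j+1)) ⊆ Ioo (-1:ℝ) 1) :
    ∫ x in Ioo (-1:ℝ) 1, F x * sfun h j x
      = (∫ x in Ioo (knot h j) (knot h (j+1)), F x) - h/2 * ∫ x in Ioo (-1:ℝ) 1, F x := by
  have h1 : ∀ x, F x * sfun h j x
      = (Ioo (knot h j) (knot h (j+1))).indicator F x - h/2 * F x := by
    intro x
    unfold sfun
    rw [Set.indicator_apply]
    by_cases hx : x ∈ Ioo (knot h j) (knot h (j+1)) <;> simp [hx] <;> ring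
  simp_rw [h1]
  rw [integral_sub (hF.indicator measurableSet_Ioo) (hF.const_mul _), integral_const_mul,
    setIntegral_indicator measurableSet_Ioo, Set.inter_eq_self_of_subset_right hsub]

lemma sfun_mean (hh : 0 < h) (hn : 0 < n) (hgrid : (2:ℝ) = n * h) {j : ℕ} (hj : j < n) :
    ∫ x in Ioo (-1:ℝ) 1, sfun h j x = 0 := by
  have h0 : ∀ x, sfun h j x = (1:ℝ) * sfun h j x := by intro x; ring
  have hsub := Ioo_piece_subset hh hgrid hj
  have hconst : IntegrableOn (fun _ : ℝ => (1:ℝ)) (Ioo (-1:ℝ) 1) :=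
    integrableOn_const (id (by rw [Real.volume_Ioo]; exact ENNReal.ofReal_ne_top))
  calc ∫ x in Ioo (-1:ℝ) 1, sfun h j x = ∫ x in Ioo (-1:ℝ) 1, (1:ℝ) * sfun h j x := by
        simp_rw [← h0]
    _ = (∫ x in Ioo (knot h j) (knot h (j+1)), (1:ℝ)) - h/2 * ∫ x in Ioo (-1:ℝ) 1, (1:ℝ) :=
        sfun_pair hconst hsub
    _ = 0 := by
        rw [setIntegral_const, setIntegral_const, measureReal_def, measureReal_def, Real.volume_Ioo, Real.volume_Ioo,
          ENNReal.toReal_ofReal (by rw [knot_succ]; linarith : (0:ℝ) ≤ knot h (j+1) - knot h j),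
          ENNReal.toReal_ofReal (by norm_num : (0:ℝ) ≤ (1:ℝ) - (-1))]
        rw [knot_succ]
        simp only [smul_eq_mul]
        ring

lemma sfun_spline (hh : 0 < h) (hn : 0 < n) (hgrid : (2:ℝ) = n * h) {j : ℕ} (hj : j < n) :
    IsPeriodicSplineOn 1 n h (-1) 1 (prim (sfun h j)) := by
  have hsint := sfun_integrableOn hh hn hgrid (n := n) j
  constructor
  constructor
  · show ContDiffOn ℝ ((1:ℕ) - 1 : ℕ) _ _
    norm_num
    exact prim_continuousOn hsint
  · intro i hi
    set c : ℝ := (if i = j then (1:ℝ) else 0) - h/2 with hc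
    have hP : ∀ t ∈ Ioo (knot h i) (knot h (i+1)), sfun h j t = (Polynomial.C c).eval t := by
      intro t ht
      rw [Polynomial.eval_C]
      exact sfun_eq_on hh t ht
    have heq := prim_piece_eq hh hgrid hsint hi hP
    refine ⟨antider (Polynomial.C c) + Polynomial.C (prim (sfun h j) (knot h i)
      - (antider (Polynomial.C c)).eval (knot h i)), ?_, ?_⟩
    · refine le_trans (Polynomial.natDegree_add_le _ _) ?_
      simp only [Polynomial.natDegree_C]
      refine max_le (le_trans (antider_natDegree _) (by simp)) (by omega)
    · intro x hx
      have hx' : x ∈ Icc (knot h i) (knot h (i+1)) := by simpa [knot] using hx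
      rw [Polynomial.eval_add, Polynomial.eval_C]
      have := heq x hx'
      linarith
  · intro l hl
    have hl0 : l = 0 := by omega
    subst hl0
    simp only [iteratedDerivWithin_zero]
    have h1 : prim (sfun h j) (-1) = 0 := by simp [prim]
    rw [h1, prim_one, sfun_mean hh hn hgrid hj]



lemma integrableOn_Ioo_of_Ioc {φ : ℝ → ℝ} (hφ : IntegrableOn φ (Ioc (-1:ℝ) 1)) :
    IntegrableOn φ (Ioo (-1:ℝ) 1) := hφ.mono_set Ioo_subset_Ioc_self

lemma contOn_to_Ioc {φ : ℝ → ℝ} (hφ : ContinuousOn φ (Icc (-1:ℝ) 1)) :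
    IntegrableOn φ (Ioc (-1:ℝ) 1) :=
  (hφ.integrableOn_compact isCompact_Icc).mono_set Ioc_subset_Icc_self

/-- The main inductive estimate. -/
theorem Bnd (hh : 0 < h) (hn : 0 < n) (hgrid : (2:ℝ) = n * h) :
    ∀ q : ℕ, ∀ f : ℝ → ℝ, IntegrableOn f (Ioc (-1:ℝ) 1) →
      IntegrableOn (fun x => f x ^ 2) (Ioc (-1:ℝ) 1) →
      (∫ x in Ioo (-1:ℝ) 1, f x) = 0 →
      (∀ v : ℝ → ℝ, IsPeriodicSplineOn (q+1) n h (-1) 1 v →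
        ∫ x in Ioo (-1:ℝ) 1, f x * deriv v x = 0) →
      ∃ c : ℝ, ∫ x in Ioo (-1:ℝ) 1, (prim f x - c)^2
        ≤ h^2/2 * ∫ x in Ioo (-1:ℝ) 1, f x ^ 2 := by
  have hIm : MeasurableSet (Ioo (-1:ℝ) 1) := measurableSet_Ioo
  have hIfin : volume (Ioo (-1:ℝ) 1) < ⊤ := by
    rw [Real.volume_Ioo]; exact ENNReal.ofReal_lt_top
  have hvol2 : (volume (Ioo (-1:ℝ) 1)).toReal = 2 := by
    rw [Real.volume_Ioo, ENNReal.toReal_ofReal (by norm_num : (0:ℝ) ≤ 1 - (-1))]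
    norm_num
  have hconst_int : ∀ c : ℝ, IntegrableOn (fun _ : ℝ => c) (Ioo (-1:ℝ) 1) :=
    fun c => integrableOn_const hIfin.ne
  intro q
  induction q with
  | zero =>
    intro f hf hf2 hmean horth
    refine ⟨0, ?_⟩
    simp only [sub_zero]
    refine base_bound hh hn hgrid hf hf2 ?_
    intro j hj
    have hv := sfun_spline hh hn hgrid hj
    have h0 := horth _ hv
    have hpieces : ∀ i, i < n → ∃ P : Polynomial ℝ,
        ∀ t ∈ Ioo (knot h i) (knot h (i+1)), sfun h j t = P.eval t := by
      intro i hi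
      refine ⟨Polynomial.C ((if i = j then (1:ℝ) else 0) - h/2), ?_⟩
      intro t ht
      rw [Polynomial.eval_C]
      exact sfun_eq_on hh t ht
    rw [integral_mul_deriv_prim hh hgrid (sfun_integrableOn hh hn hgrid j) hpieces] at h0
    rw [sfun_pair (integrableOn_Ioo_of_Ioc hf) (Ioo_piece_subset hh hgrid hj), hmean] at h0
    rw [integral_Ioc_eq_integral_Ioo]
    linarith
  | succ q ih =>
    intro f hf hf2 hmean horth
    have hprimf_cont : ContinuousOn (prim f) (Icc (-1:ℝ) 1) := prim_continuousOn hf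
    set cf : ℝ := (∫ x in Ioo (-1:ℝ) 1, prim f x) / 2 with hcf
    set F : ℝ → ℝ := fun x => prim f x - cf with hF
    have hFcont : ContinuousOn F (Icc (-1:ℝ) 1) := hprimf_cont.sub continuousOn_const
    have hFIoc : IntegrableOn F (Ioc (-1:ℝ) 1) := contOn_to_Ioc hFcont
    have hF2Ioc : IntegrableOn (fun x => F x ^ 2) (Ioc (-1:ℝ) 1) :=
      contOn_to_Ioc (hFcont.pow 2)
    have hFaesm : AEStronglyMeasurable F (volume.restrict (Ioo (-1:ℝ) 1)) :=
      (integrableOn_Ioo_of_Ioc hFIoc).1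
    have hfaesm : AEStronglyMeasurable f (volume.restrict (Ioo (-1:ℝ) 1)) :=
      (integrableOn_Ioo_of_Ioc hf).1
    have hFmean : ∫ x in Ioo (-1:ℝ) 1, F x = 0 := by
      rw [hF]
      rw [integral_sub (integrableOn_Ioo_of_Ioc (contOn_to_Ioc hprimf_cont)) (hconst_int cf)]
      rw [setIntegral_const, measureReal_def, hvol2, hcf]
      simp only [smul_eq_mul]
      ring
    -- orthogonality of F against lower-degree splines
    have hForth : ∀ v : ℝ → ℝ, IsPeriodicSplineOn (q+1) n h (-1) 1 v →
        ∫ x in Ioo (-1:ℝ) 1, F x * deriv v x = 0 := by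
      intro v hv
      have hdv := spline_deriv_integrable hh hn hgrid hv.1
      have hvcont : ContinuousOn v (Icc (-1:ℝ) 1) := hv.1.1.continuousOn
      have hftc := spline_ftc hh hn hgrid hv.1
      have hvIoc : IntegrableOn v (Ioc (-1:ℝ) 1) := contOn_to_Ioc hvcont
      have hdvaesm : AEStronglyMeasurable (deriv v) (volume.restrict (Ioo (-1:ℝ) 1)) :=
        (integrableOn_Ioo_of_Ioc hdv.1).1
      have hperi : v (-1) = v 1 := by
        have := hv.2 0 (by omega)
        simpa [iteratedDerivWithin_zero] using this
      have hdvmean : ∫ x in Ioo (-1:ℝ) 1, deriv v x = 0 := by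
        have h1 : v 1 = v (-1) + prim (deriv v) 1 := hftc 1 (by norm_num)
        rw [prim_one] at h1
        linarith
      -- ∫ f v = 0
      have hfv : ∫ x in Ioo (-1:ℝ) 1, f x * v x = 0 := by
        set vbar : ℝ := (∫ x in Ioo (-1:ℝ) 1, v x) / 2 with hvbar
        set s : ℝ → ℝ := fun x => v x - vbar with hs
        have hsspline : IsPeriodicSplineOn (q+1) n h (-1) 1 s := spline_sub_const hv vbar
        have hsmean : ∫ x in Ioo (-1:ℝ) 1, s x = 0 := by
          rw [hs]
          rw [integral_sub (integrableOn_Ioo_of_Ioc hvIoc) (hconst_int vbar)]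
          rw [setIntegral_const, measureReal_def, hvol2, hvbar]
          simp only [smul_eq_mul]
          ring
        have hV := prim_spline hh hn hgrid (by omega : 1 ≤ q+1) hsspline hsmean
        have h0 := horth _ hV
        have hsint : IntegrableOn s (Ioc (-1:ℝ) 1) :=
          contOn_to_Ioc (hvcont.sub continuousOn_const)
        have hspieces : ∀ i, i < n → ∃ P : Polynomial ℝ,
            ∀ t ∈ Ioo (knot h i) (knot h (i+1)), s t = P.eval t := by
          intro i hi
          obtain ⟨P, _, hP⟩ := spline_piece hv.1 hi
          refine ⟨P - Polynomial.C vbar, ?_⟩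
          intro t ht
          rw [Polynomial.eval_sub, Polynomial.eval_C, hs]
          show v t - vbar = _
          rw [hP t ⟨ht.1.le, ht.2.le⟩]
        rw [integral_mul_deriv_prim hh hgrid hsint hspieces] at h0
        have hfs_int : IntegrableOn (fun x => f x * s x) (Ioo (-1:ℝ) 1) :=
          mul_integrable hfaesm (integrableOn_Ioo_of_Ioc hsint).1
            (integrableOn_Ioo_of_Ioc hf2)
            (integrableOn_Ioo_of_Ioc (contOn_to_Ioc ((hvcont.sub continuousOn_const).pow 2)))
        have hsplit : ∀ x : ℝ, f x * v x = f x * s x + vbar * f x := by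
          intro x
          rw [hs]
          show f x * v x = f x * (v x - vbar) + vbar * f x
          ring
        calc ∫ x in Ioo (-1:ℝ) 1, f x * v x
            = ∫ x in Ioo (-1:ℝ) 1, (f x * s x + vbar * f x) :=
              setIntegral_congr_fun hIm (fun x _ => hsplit x)
          _ = (∫ x in Ioo (-1:ℝ) 1, f x * s x) + vbar * ∫ x in Ioo (-1:ℝ) 1, f x := by
              rw [integral_add hfs_int ((integrableOn_Ioo_of_Ioc hf).const_mul vbar),
                integral_const_mul]
          _ = 0 := by rw [h0, hmean]; ring
      -- ∫ f · prim (deriv v) = 0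
      have hfpdv : ∫ x in Ioo (-1:ℝ) 1, f x * prim (deriv v) x = 0 := by
        have h1 : ∫ x in Ioo (-1:ℝ) 1, f x * prim (deriv v) x
            = ∫ x in Ioo (-1:ℝ) 1, (f x * v x - v (-1) * f x) := by
          refine setIntegral_congr_fun hIm ?_
          intro x hx
          have := hftc x ⟨hx.1.le, hx.2.le⟩
          have h2 : prim (deriv v) x = v x - v (-1) := by linarith
          show f x * prim (deriv v) x = f x * v x - v (-1) * f x
          rw [h2]; ring
        have hfvint : IntegrableOn (fun x => f x * v x) (Ioo (-1:ℝ) 1) :=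
          mul_integrable hfaesm (integrableOn_Ioo_of_Ioc hvIoc).1
            (integrableOn_Ioo_of_Ioc hf2)
            (integrableOn_Ioo_of_Ioc (contOn_to_Ioc (hvcont.pow 2)))
        rw [h1, integral_sub hfvint ((integrableOn_Ioo_of_Ioc hf).const_mul (v (-1))),
          integral_const_mul, hfv, hmean]
        ring
      -- assemble via parts
      have hparts := parts hf hdv.1
      have hsplitF : ∀ x : ℝ, F x * deriv v x = prim f x * deriv v x - cf * deriv v x := by
        intro x; rw [hF]; show (prim f x - cf) * _ = _; ring
      have hpfdv_int : IntegrableOn (fun x => prim f x * deriv v x) (Ioo (-1:ℝ) 1) :=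
        mul_integrable (integrableOn_Ioo_of_Ioc (contOn_to_Ioc hprimf_cont)).1 hdvaesm
          (integrableOn_Ioo_of_Ioc (contOn_to_Ioc (hprimf_cont.pow 2)))
          (integrableOn_Ioo_of_Ioc hdv.2)
      calc ∫ x in Ioo (-1:ℝ) 1, F x * deriv v x
          = ∫ x in Ioo (-1:ℝ) 1, (prim f x * deriv v x - cf * deriv v x) :=
            setIntegral_congr_fun hIm (fun x _ => hsplitF x)
        _ = (∫ x in Ioo (-1:ℝ) 1, prim f x * deriv v x)
            - cf * ∫ x in Ioo (-1:ℝ) 1, deriv v x := by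
            rw [integral_sub hpfdv_int ((integrableOn_Ioo_of_Ioc hdv.1).const_mul cf),
              integral_const_mul]
        _ = 0 := by rw [hparts, hdvmean, hmean, hfpdv]; ring
    -- apply the induction hypothesis to F
    obtain ⟨c', hc'⟩ := ih F hFIoc hF2Ioc hFmean hForth
    -- the duality estimate
    have hprimF_cont : ContinuousOn (prim F) (Icc (-1:ℝ) 1) := prim_continuousOn hFIoc
    have hfpF_int : IntegrableOn (fun x => f x * (prim F x - c')) (Ioo (-1:ℝ) 1) :=
      mul_integrable hfaesm
        (integrableOn_Ioo_of_Ioc (contOn_to_Ioc (hprimF_cont.sub continuousOn_const))).1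
        (integrableOn_Ioo_of_Ioc hf2)
        (integrableOn_Ioo_of_Ioc (contOn_to_Ioc ((hprimF_cont.sub continuousOn_const).pow 2)))
    have hX : ∫ x in Ioo (-1:ℝ) 1, F x ^ 2
        = - ∫ x in Ioo (-1:ℝ) 1, f x * (prim F x - c') := by
      have hFF_int : IntegrableOn (fun x => prim f x * F x) (Ioo (-1:ℝ) 1) :=
        mul_integrable (integrableOn_Ioo_of_Ioc (contOn_to_Ioc hprimf_cont)).1 hFaesm
          (integrableOn_Ioo_of_Ioc (contOn_to_Ioc (hprimf_cont.pow 2)))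
          (integrableOn_Ioo_of_Ioc hF2Ioc)
      have h1 : ∫ x in Ioo (-1:ℝ) 1, F x ^ 2
          = (∫ x in Ioo (-1:ℝ) 1, prim f x * F x) - cf * ∫ x in Ioo (-1:ℝ) 1, F x := by
        rw [← integral_const_mul]
        rw [← integral_sub hFF_int (hFaesm.const_mul cf |> fun hm =>
          ((integrableOn_Ioo_of_Ioc hFIoc).const_mul cf))]
        refine setIntegral_congr_fun hIm ?_
        intro x hx
        show F x ^ 2 = prim f x * F x - cf * F x
        rw [hF]
        show (prim f x - cf)^2 = prim f x * (prim f x - cf) - cf * (prim f x - cf)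
        ring
      have hparts2 := parts hf hFIoc
      have h2 : ∫ x in Ioo (-1:ℝ) 1, f x * prim F x
          = ∫ x in Ioo (-1:ℝ) 1, f x * (prim F x - c') := by
        have hfpF_int2 : IntegrableOn (fun x => f x * prim F x) (Ioo (-1:ℝ) 1) :=
          mul_integrable hfaesm
            (integrableOn_Ioo_of_Ioc (contOn_to_Ioc hprimF_cont)).1
            (integrableOn_Ioo_of_Ioc hf2)
            (integrableOn_Ioo_of_Ioc (contOn_to_Ioc (hprimF_cont.pow 2)))
        have : ∫ x in Ioo (-1:ℝ) 1, f x * (prim F x - c')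
            = (∫ x in Ioo (-1:ℝ) 1, f x * prim F x) - c' * ∫ x in Ioo (-1:ℝ) 1, f x := by
          rw [← integral_const_mul, ← integral_sub hfpF_int2
            ((integrableOn_Ioo_of_Ioc hf).const_mul c')]
          refine setIntegral_congr_fun hIm ?_
          intro x hx
          ring
        rw [this, hmean]
        ring
      rw [h1, hFmean, hparts2, hFmean, hmean, h2]
      ring
    -- Cauchy-Schwarz
    have hCS : - ∫ x in Ioo (-1:ℝ) 1, f x * (prim F x - c')
        ≤ Real.sqrt (∫ x in Ioo (-1:ℝ) 1, f x ^ 2)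
          * Real.sqrt (∫ x in Ioo (-1:ℝ) 1, (prim F x - c') ^ 2) := by
      have := cauchy_schwarz (S := Ioo (-1:ℝ) 1) (f := fun x => - f x)
        (g := fun x => prim F x - c') hfaesm.neg
        (integrableOn_Ioo_of_Ioc (contOn_to_Ioc (hprimF_cont.sub continuousOn_const))).1
        (by simpa using integrableOn_Ioo_of_Ioc hf2)
        (integrableOn_Ioo_of_Ioc (contOn_to_Ioc ((hprimF_cont.sub continuousOn_const).pow 2)))
      have hneg : ∫ x in Ioo (-1:ℝ) 1, (- f x) * (prim F x - c')
          = - ∫ x in Ioo (-1:ℝ) 1, f x * (prim F x - c') := by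
        rw [← integral_neg]
        refine setIntegral_congr_fun hIm ?_
        intro x hx
        ring
      have hsq : ∫ x in Ioo (-1:ℝ) 1, (- f x) ^ 2 = ∫ x in Ioo (-1:ℝ) 1, f x ^2 := by
        refine setIntegral_congr_fun hIm ?_
        intro x hx
        ring
      rw [hneg, hsq] at this
      exact this
    -- conclude
    refine ⟨cf, ?_⟩
    have hXnn : (0:ℝ) ≤ ∫ x in Ioo (-1:ℝ) 1, F x ^ 2 := by positivity
    have hYnn : (0:ℝ) ≤ ∫ x in Ioo (-1:ℝ) 1, f x ^ 2 := by positivity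
    have hgoal : ∫ x in Ioo (-1:ℝ) 1, F x ^ 2 ≤ h^2/2 * ∫ x in Ioo (-1:ℝ) 1, f x ^ 2 := by
      set X := ∫ x in Ioo (-1:ℝ) 1, F x ^ 2 with hXdef
      set Y := ∫ x in Ioo (-1:ℝ) 1, f x ^ 2 with hYdef
      have hstep : X ≤ Real.sqrt Y * Real.sqrt (h^2/2 * X) := by
        have h3 : Real.sqrt (∫ x in Ioo (-1:ℝ) 1, (prim F x - c') ^ 2)
            ≤ Real.sqrt (h^2/2 * X) := Real.sqrt_le_sqrt hc'
        calc X = - ∫ x in Ioo (-1:ℝ) 1, f x * (prim F x - c') := hX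
          _ ≤ Real.sqrt Y * Real.sqrt (∫ x in Ioo (-1:ℝ) 1, (prim F x - c') ^ 2) := hCS
          _ ≤ Real.sqrt Y * Real.sqrt (h^2/2 * X) :=
              mul_le_mul_of_nonneg_left h3 (Real.sqrt_nonneg _)
      have hsplit : Real.sqrt (h^2/2 * X) = Real.sqrt (h^2/2) * Real.sqrt X :=
        Real.sqrt_mul (by positivity) X
      rw [hsplit] at hstep
      have hXX : Real.sqrt X * Real.sqrt X = X := Real.mul_self_sqrt hXnn
      have hYY : Real.sqrt Y * Real.sqrt Y = Y := Real.mul_self_sqrt hYnn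
      have hhh : Real.sqrt (h^2/2) * Real.sqrt (h^2/2) = h^2/2 :=
        Real.mul_self_sqrt (by positivity)
      nlinarith [sq_nonneg (Real.sqrt X - Real.sqrt Y * Real.sqrt (h^2/2)),
        Real.sqrt_nonneg X, Real.sqrt_nonneg Y, Real.sqrt_nonneg (h^2/2)]
    exact hgoal



lemma integrableOn_Ioo_of_Ioc' {φ : ℝ → ℝ} (hφ : IntegrableOn φ (Ioc (-1:ℝ) 1)) :
    IntegrableOn φ (Ioo (-1:ℝ) 1) := hφ.mono_set Ioo_subset_Ioc_self

lemma contOn_to_Ioc' {φ : ℝ → ℝ} (hφ : ContinuousOn φ (Icc (-1:ℝ) 1)) :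
    IntegrableOn φ (Ioc (-1:ℝ) 1) :=
  (hφ.integrableOn_compact isCompact_Icc).mono_set Ioc_subset_Icc_self

lemma integrableOn_Ioc_of_Ioo {φ : ℝ → ℝ} (hφ : IntegrableOn φ (Ioo (-1:ℝ) 1)) :
    IntegrableOn φ (Ioc (-1:ℝ) 1) := by
  rw [show Ioc (-1:ℝ) 1 = Ioo (-1:ℝ) 1 ∪ {1} from (Set.Ioo_union_right (by norm_num)).symm]
  refine hφ.union ?_
  have h0 : volume.restrict ({1} : Set ℝ) = 0 :=
    Measure.restrict_eq_zero.2 (measure_singleton _)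
  rw [IntegrableOn, h0]
  exact integrable_zero_measure

/-- iterated derivatives of constants vanish -/
lemma iteratedDerivWithin_const_zero : ∀ l : ℕ, ∀ c : ℝ, ∀ y ∈ Icc (-1:ℝ) 1,
    iteratedDerivWithin (l+1) (fun _ => c) (Icc (-1:ℝ) 1) y = 0 := by
  intro l
  induction l with
  | zero =>
    intro c y hy
    rw [iteratedDerivWithin_succ', iteratedDerivWithin_zero]
    exact congrFun (derivWithin_const (Icc (-1:ℝ) 1) c) y
  | succ l ihl =>
    intro c y hy
    rw [iteratedDerivWithin_succ']
    have hEq : Set.EqOn (derivWithin (fun _ => c) (Icc (-1:ℝ) 1)) (fun _ => (0:ℝ))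
        (Icc (-1:ℝ) 1) := by
      intro z hz
      exact congrFun (derivWithin_const (Icc (-1:ℝ) 1) c) z
    rw [iteratedDerivWithin_congr hEq hy]
    exact ihl 0 y hy

/-- constants are periodic splines -/
lemma const_spline {p : ℕ} (c : ℝ) : IsPeriodicSplineOn p n h (-1) 1 (fun _ => c) := by
  refine ⟨⟨contDiffOn_const, ?_⟩, ?_⟩
  · intro j hj
    exact ⟨Polynomial.C c, by simp, fun x _ => by rw [Polynomial.eval_C]⟩
  · intro l hl
    match l with
    | 0 => simp [iteratedDerivWithin_zero]
    | (l' + 1) =>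
      rw [iteratedDerivWithin_const_zero l' c (-1) (by norm_num),
        iteratedDerivWithin_const_zero l' c 1 (by norm_num)]

theorem main (p : ℕ) (hp : 1 ≤ p) (hh : 0 < h)
    (hn : 0 < n) (hgrid : (2 : ℝ) = n * h) (hhp : h * p < 1)
    (u g w : ℝ → ℝ) (hu : IsH1On (-1) 1 u g) (hper : u (-1) = u 1)
    (hw : IsPeriodicSplineOn p n h (-1) 1 w)
    (hgal : ∀ v : ℝ → ℝ, IsPeriodicSplineOn p n h (-1) 1 v →
      (∫ x in Set.Ioo (-1 : ℝ) 1, deriv w x * deriv v x) +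
          (∫ x in Set.Ioo (-1 : ℝ) 1, w x) * (∫ x in Set.Ioo (-1 : ℝ) 1, v x) =
        (∫ x in Set.Ioo (-1 : ℝ) 1, g x * deriv v x) +
          (∫ x in Set.Ioo (-1 : ℝ) 1, u x) * (∫ x in Set.Ioo (-1 : ℝ) 1, v x)) :
    L2 (-1) 1 (fun x => u x - w x) ≤ Real.sqrt 2 * h * L2 (-1) 1 g := by
  obtain ⟨hgII, hurep, hg2Ioo⟩ := hu
  have hIm : MeasurableSet (Ioo (-1:ℝ) 1) := measurableSet_Ioo
  have hvol2 : (volume (Ioo (-1:ℝ) 1)).toReal = 2 := by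
    rw [Real.volume_Ioo, ENNReal.toReal_ofReal (by norm_num : (0:ℝ) ≤ 1 - (-1))]
    norm_num
  have hg : IntegrableOn g (Ioc (-1:ℝ) 1) := hgII.1
  have hg2 : IntegrableOn (fun x => g x ^ 2) (Ioc (-1:ℝ) 1) := integrableOn_Ioc_of_Ioo hg2Ioo
  have hwd := spline_deriv_integrable hh hn hgrid hw.1
  have hwftc := spline_ftc hh hn hgrid hw.1
  have hwcont : ContinuousOn w (Icc (-1:ℝ) 1) := hw.1.1.continuousOn
  have hw_peri : w (-1) = w 1 := by
    have := hw.2 0 (by omega)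
    simpa [iteratedDerivWithin_zero] using this
  -- mean equality
  have hone : IsPeriodicSplineOn p n h (-1) 1 (fun _ => (1:ℝ)) := const_spline 1
  have hmuw : (∫ x in Ioo (-1:ℝ) 1, w x) = ∫ x in Ioo (-1:ℝ) 1, u x := by
    have h1 := hgal _ hone
    simp only [deriv_const', mul_zero, integral_zero, zero_add] at h1
    rw [setIntegral_const, measureReal_def, hvol2, smul_eq_mul, mul_one] at h1
    linarith
  -- energy identity
  have hgw : (∫ x in Ioo (-1:ℝ) 1, deriv w x * deriv w x)
      = ∫ x in Ioo (-1:ℝ) 1, g x * deriv w x := by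
    have h1 := hgal _ hw
    rw [hmuw] at h1
    linarith
  -- the residual
  set f0 : ℝ → ℝ := fun x => g x - deriv w x with hf0def
  have hf0 : IntegrableOn f0 (Ioc (-1:ℝ) 1) := hg.sub hwd.1
  have hgaesm : AEStronglyMeasurable g (volume.restrict (Ioc (-1:ℝ) 1)) := hg.1
  have hgdw_int : IntegrableOn (fun x => g x * deriv w x) (Ioc (-1:ℝ) 1) :=
    mul_integrable hgaesm hwd.1.1 hg2 hwd.2
  have hf0sq : IntegrableOn (fun x => f0 x ^ 2) (Ioc (-1:ℝ) 1) := by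
    have hrhs : IntegrableOn (fun x => g x ^ 2 - 2 * (g x * deriv w x) + deriv w x ^ 2)
        (Ioc (-1:ℝ) 1) := (hg2.sub (hgdw_int.const_mul 2)).add hwd.2
    refine hrhs.congr_fun ?_ measurableSet_Ioc
    intro x _
    show g x ^2 - 2*(g x * deriv w x) + deriv w x ^2 = f0 x ^2
    rw [hf0def]
    ring
  -- means
  have hmg : (∫ x in Ioo (-1:ℝ) 1, g x) = 0 := by
    have h1 := hurep 1 (by norm_num)
    rw [← prim_one]
    show prim g 1 = 0
    rw [prim]
    have : u 1 = u (-1) + ∫ t in (-1:ℝ)..1, g t := h1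
    rw [← hper] at this
    linarith
  have hmdw : (∫ x in Ioo (-1:ℝ) 1, deriv w x) = 0 := by
    have h1 : w 1 = w (-1) + prim (deriv w) 1 := hwftc 1 (by norm_num)
    rw [prim_one] at h1
    linarith
  have hmf0 : (∫ x in Ioo (-1:ℝ) 1, f0 x) = 0 := by
    rw [hf0def]
    rw [integral_sub (integrableOn_Ioo_of_Ioc' hg) (integrableOn_Ioo_of_Ioc' hwd.1)]
    rw [hmg, hmdw]
    ring
  -- orthogonality
  have horth : ∀ v : ℝ → ℝ, IsPeriodicSplineOn ((p-1)+1) n h (-1) 1 v →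
      ∫ x in Ioo (-1:ℝ) 1, f0 x * deriv v x = 0 := by
    rw [show (p-1)+1 = p by omega]
    intro v hv
    have hdv := spline_deriv_integrable hh hn hgrid hv.1
    have h1 := hgal _ hv
    rw [hmuw] at h1
    have h2 : (∫ x in Ioo (-1:ℝ) 1, deriv w x * deriv v x)
        = ∫ x in Ioo (-1:ℝ) 1, g x * deriv v x := by linarith
    have hgdv : IntegrableOn (fun x => g x * deriv v x) (Ioo (-1:ℝ) 1) :=
      mul_integrable (integrableOn_Ioo_of_Ioc' hg).1 (integrableOn_Ioo_of_Ioc' hdv.1).1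
        (integrableOn_Ioo_of_Ioc' hg2) (integrableOn_Ioo_of_Ioc' hdv.2)
    have hdwdv : IntegrableOn (fun x => deriv w x * deriv v x) (Ioo (-1:ℝ) 1) :=
      mul_integrable (integrableOn_Ioo_of_Ioc' hwd.1).1 (integrableOn_Ioo_of_Ioc' hdv.1).1
        (integrableOn_Ioo_of_Ioc' hwd.2) (integrableOn_Ioo_of_Ioc' hdv.2)
    calc ∫ x in Ioo (-1:ℝ) 1, f0 x * deriv v x
        = ∫ x in Ioo (-1:ℝ) 1, (g x * deriv v x - deriv w x * deriv v x) := by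
          refine setIntegral_congr_fun hIm ?_
          intro x _
          show f0 x * deriv v x = _
          rw [hf0def]
          ring
      _ = (∫ x in Ioo (-1:ℝ) 1, g x * deriv v x)
          - ∫ x in Ioo (-1:ℝ) 1, deriv w x * deriv v x := integral_sub hgdv hdwdv
      _ = 0 := by rw [h2]; ring
  -- main estimate
  obtain ⟨c, hc⟩ := Bnd hh hn hgrid (p-1) f0 hf0 hf0sq hmf0 horth
  -- ∫ f0² ≤ ∫ g²
  have hdwsq_Ioo : (∫ x in Ioo (-1:ℝ) 1, deriv w x * deriv w x)
      = ∫ x in Ioo (-1:ℝ) 1, deriv w x ^ 2 := by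
    refine setIntegral_congr_fun hIm ?_
    intro x _
    ring
  have hf0g : (∫ x in Ioo (-1:ℝ) 1, f0 x ^ 2) ≤ ∫ x in Ioo (-1:ℝ) 1, g x ^ 2 := by
    have hA : IntegrableOn (fun x => g x ^2 - 2*(g x * deriv w x)) (Ioo (-1:ℝ) 1) :=
      (integrableOn_Ioo_of_Ioc' hg2).sub ((integrableOn_Ioo_of_Ioc' hgdw_int).const_mul 2)
    have hexp : (∫ x in Ioo (-1:ℝ) 1, f0 x ^ 2)
        = (∫ x in Ioo (-1:ℝ) 1, g x ^2) - 2 * (∫ x in Ioo (-1:ℝ) 1, g x * deriv w x)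
          + ∫ x in Ioo (-1:ℝ) 1, deriv w x ^2 := by
      calc (∫ x in Ioo (-1:ℝ) 1, f0 x ^ 2)
          = ∫ x in Ioo (-1:ℝ) 1, (g x ^2 - 2*(g x * deriv w x) + deriv w x ^2) := by
            refine setIntegral_congr_fun hIm ?_
            intro x _
            show f0 x ^2 = g x ^2 - 2*(g x * deriv w x) + deriv w x ^2
            rw [hf0def]
            ring
        _ = (∫ x in Ioo (-1:ℝ) 1, (g x ^2 - 2*(g x * deriv w x)))
            + ∫ x in Ioo (-1:ℝ) 1, deriv w x ^2 :=
            integral_add hA (integrableOn_Ioo_of_Ioc' hwd.2)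
        _ = (∫ x in Ioo (-1:ℝ) 1, g x ^2) - (∫ x in Ioo (-1:ℝ) 1, 2*(g x * deriv w x))
            + ∫ x in Ioo (-1:ℝ) 1, deriv w x ^2 := by
            rw [integral_sub (integrableOn_Ioo_of_Ioc' hg2)
              ((integrableOn_Ioo_of_Ioc' hgdw_int).const_mul 2)]
        _ = (∫ x in Ioo (-1:ℝ) 1, g x ^2) - 2 * (∫ x in Ioo (-1:ℝ) 1, g x * deriv w x)
            + ∫ x in Ioo (-1:ℝ) 1, deriv w x ^2 := by
            rw [integral_const_mul]
    have hdwsq_nn : (0:ℝ) ≤ ∫ x in Ioo (-1:ℝ) 1, deriv w x ^2 := by positivity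
    rw [hexp]
    rw [← hgw, hdwsq_Ioo]
    linarith
  -- representation of the error
  have hprim_sub : ∀ x ∈ Icc (-1:ℝ) 1, prim f0 x = prim g x - prim (deriv w) x := by
    intro x hx
    rw [prim, prim, prim, hf0def]
    exact intervalIntegral.integral_sub
      (intervalIntegrable_of_Ioc hg (by norm_num) hx)
      (intervalIntegrable_of_Ioc hwd.1 (by norm_num) hx)
  set c0 : ℝ := u (-1) - w (-1) with hc0
  have he : ∀ x ∈ Icc (-1:ℝ) 1, u x - w x = c0 + prim f0 x := by
    intro x hx
    have h1 := hurep x hx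
    have h2 := hwftc x hx
    rw [hprim_sub x hx]
    have h3 : prim g x = ∫ t in (-1:ℝ)..x, g t := rfl
    rw [hc0]
    rw [h3]
    linarith
  -- integrability of u, w on Ioo
  have hu_int : IntegrableOn u (Ioo (-1:ℝ) 1) := by
    have hcont : ContinuousOn (fun x => u (-1) + prim g x) (Icc (-1:ℝ) 1) :=
      continuousOn_const.add (prim_continuousOn hg)
    refine ((hcont.integrableOn_compact isCompact_Icc).mono_set
      Ioo_subset_Icc_self).congr_fun ?_ hIm
    intro x hx
    exact (hurep x ⟨hx.1.le, hx.2.le⟩).symm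
  have hw_int : IntegrableOn w (Ioo (-1:ℝ) 1) :=
    (hwcont.integrableOn_compact isCompact_Icc).mono_set Ioo_subset_Icc_self
  have hme : (∫ x in Ioo (-1:ℝ) 1, (u x - w x)) = 0 := by
    rw [integral_sub hu_int hw_int, hmuw]
    ring
  -- final algebra
  have hprimf0_cont : ContinuousOn (prim f0) (Icc (-1:ℝ) 1) := prim_continuousOn hf0
  have hG_cont : ContinuousOn (fun x => prim f0 x - c) (Icc (-1:ℝ) 1) :=
    hprimf0_cont.sub continuousOn_const
  have hG_int : IntegrableOn (fun x => prim f0 x - c) (Ioo (-1:ℝ) 1) :=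
    (hG_cont.integrableOn_compact isCompact_Icc).mono_set Ioo_subset_Icc_self
  have hG2_int : IntegrableOn (fun x => (prim f0 x - c)^2) (Ioo (-1:ℝ) 1) :=
    ((hG_cont.pow 2).integrableOn_compact isCompact_Icc).mono_set Ioo_subset_Icc_self
  set β : ℝ := c0 + c with hβ
  have hsum_e : (∫ x in Ioo (-1:ℝ) 1, (u x - w x))
      = (∫ x in Ioo (-1:ℝ) 1, (prim f0 x - c)) + 2 * β := by
    have h1 : ∫ x in Ioo (-1:ℝ) 1, (u x - w x)
        = ∫ x in Ioo (-1:ℝ) 1, ((prim f0 x - c) + β) := by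
      refine setIntegral_congr_fun hIm ?_
      intro x hx
      show u x - w x = (prim f0 x - c) + β
      rw [he x ⟨hx.1.le, hx.2.le⟩, hβ]
      ring
    rw [h1, integral_add hG_int (integrableOn_const (id (by
      rw [Real.volume_Ioo]; exact ENNReal.ofReal_ne_top))), setIntegral_const, measureReal_def, hvol2,
      smul_eq_mul]
  have hGsum : (∫ x in Ioo (-1:ℝ) 1, (prim f0 x - c)) = -(2*β) := by
    rw [hme] at hsum_e
    linarith
  have hsq_e : (∫ x in Ioo (-1:ℝ) 1, (u x - w x)^2)
      = (∫ x in Ioo (-1:ℝ) 1, (prim f0 x - c)^2) - 2*β^2 := by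
    have h1 : ∫ x in Ioo (-1:ℝ) 1, (u x - w x)^2
        = ∫ x in Ioo (-1:ℝ) 1, ((prim f0 x - c)^2 + 2*β*(prim f0 x - c) + β^2) := by
      refine setIntegral_congr_fun hIm ?_
      intro x hx
      show (u x - w x)^2 = (prim f0 x - c)^2 + 2*β*(prim f0 x - c) + β^2
      rw [he x ⟨hx.1.le, hx.2.le⟩, hβ]
      ring
    have hAB : IntegrableOn (fun x => (prim f0 x - c)^2 + 2*β*(prim f0 x - c))
        (Ioo (-1:ℝ) 1) := hG2_int.add (hG_int.const_mul (2*β))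
    rw [h1, integral_add hAB (integrableOn_const
        (id (by rw [Real.volume_Ioo]; exact ENNReal.ofReal_ne_top))),
      integral_add hG2_int (hG_int.const_mul (2*β)), integral_const_mul,
      setIntegral_const, measureReal_def, hvol2, smul_eq_mul, hGsum]
    ring
  -- put everything together
  have hfinal : (∫ x in Ioo (-1:ℝ) 1, (u x - w x)^2)
      ≤ h^2/2 * ∫ x in Ioo (-1:ℝ) 1, g x ^2 := by
    rw [hsq_e]
    have h1 : (∫ x in Ioo (-1:ℝ) 1, (prim f0 x - c)^2)
        ≤ h^2/2 * ∫ x in Ioo (-1:ℝ) 1, f0 x ^2 := hc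
    nlinarith [sq_nonneg β, mul_le_mul_of_nonneg_left hf0g (by positivity : (0:ℝ) ≤ h^2/2)]
  -- conclude with square roots
  unfold L2
  have hGnn : (0:ℝ) ≤ ∫ x in Ioo (-1:ℝ) 1, g x ^ 2 := by positivity
  calc Real.sqrt (∫ x in Ioo (-1:ℝ) 1, (u x - w x)^2)
      ≤ Real.sqrt (h^2/2 * ∫ x in Ioo (-1:ℝ) 1, g x ^2) := Real.sqrt_le_sqrt hfinal
    _ ≤ Real.sqrt (2*h^2 * ∫ x in Ioo (-1:ℝ) 1, g x ^2) := by
        refine Real.sqrt_le_sqrt ?_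
        nlinarith [sq_nonneg h]
    _ = Real.sqrt 2 * h * Real.sqrt (∫ x in Ioo (-1:ℝ) 1, g x ^2) := by
        rw [Real.sqrt_mul (by positivity), Real.sqrt_mul (by norm_num), Real.sqrt_sq hh.le]


end PHPE
end

/-- Lemma 8 of the paper: approximation error estimate for the
`H¹∘`-orthogonal projection of a periodic `H¹`-function onto the periodic spline space. -/
theorem periodic_H1_projection_error (p n : ℕ) (h : ℝ) (hp : 1 ≤ p) (hh : 0 < h)
    (hn : 0 < n) (hgrid : (2 : ℝ) = n * h) (hhp : h * p < 1)
    (u g w : ℝ → ℝ) (hu : IsH1On (-1) 1 u g) (hper : u (-1) = u 1)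
    (hw : IsPeriodicSplineOn p n h (-1) 1 w)
    (hgal : ∀ v : ℝ → ℝ, IsPeriodicSplineOn p n h (-1) 1 v →
      (∫ x in Set.Ioo (-1 : ℝ) 1, deriv w x * deriv v x) +
          (∫ x in Set.Ioo (-1 : ℝ) 1, w x) * (∫ x in Set.Ioo (-1 : ℝ) 1, v x) =
        (∫ x in Set.Ioo (-1 : ℝ) 1, g x * deriv v x) +
          (∫ x in Set.Ioo (-1 : ℝ) 1, u x) * (∫ x in Set.Ioo (-1 : ℝ) 1, v x)) :
    L2 (-1) 1 (fun x => u x - w x) ≤ Real.sqrt 2 * h * L2 (-1) 1 g := by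
  exact PHPE.main (n := n) (h := h) p hp hh hn hgrid hhp u g w hu hper hw hgal
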